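/- arXiv:1805.08300 — 7 statements merged into one kernel-verified Lean document; each statement's English description precedes it below -/
import Mathlib

section
/- Let x_1, …, x_n be vectors in ℝ^q with sample mean x̄ = n⁻¹ Σ_{i=1}^n x_i and sample covariance matrix S_n = n⁻¹ Σ_{i=1}^n (x_i − x̄)(x_i − x̄)ᵀ. If S_n is positive definite, then the pair (μ, Σ) = (x̄, S_n) is the unique minimizer, over all μ ∈ ℝ^q and all q×q real symmetric positive definite matrices Σ, of the function l(μ, Σ) = n·log det(Σ) + Σ_{i=1}^n (x_i − μ)ᵀ Σ⁻¹ (x_i − μ). -/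
open Matrix

section Aux

variable {q n : ℕ}

lemma trace_eq_sum_eig {A : Matrix (Fin q) (Fin q) ℝ} (hA : A.IsHermitian) :
    A.trace = ∑ i, hA.eigenvalues i := by
  conv_lhs => rw [hA.spectral_theorem]
  rw [Unitary.conjStarAlgAut_apply, trace_mul_cycle]
  rw [(Matrix.mem_unitaryGroup_iff').mp (hA.eigenvectorUnitary).2]
  simp [trace_diagonal]

lemma eq_one_of_eig {A : Matrix (Fin q) (Fin q) ℝ} (hA : A.IsHermitian)
    (h : ∀ i, hA.eigenvalues i = 1) : A = 1 := by
  rw [hA.spectral_theorem]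
  have hd : Matrix.diagonal (RCLike.ofReal ∘ hA.eigenvalues) = (1 : Matrix (Fin q) (Fin q) ℝ) := by
    ext i j
    simp [diagonal_apply, one_apply, h]
  rw [hd, Unitary.conjStarAlgAut_apply, mul_one, (Matrix.mem_unitaryGroup_iff).mp (hA.eigenvectorUnitary).2]

open scoped MatrixOrder in
/-- Key matrix inequality: log det S + q ≤ log det Σ + tr(Σ⁻¹ S), equality only at Σ = S. -/
lemma key_ineq {S Sg : Matrix (Fin q) (Fin q) ℝ} (hS : S.PosDef) (hSg : Sg.PosDef) :
    Real.log S.det + (q : ℝ) ≤ Real.log Sg.det + (Sg⁻¹ * S).trace ∧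
      (Real.log Sg.det + (Sg⁻¹ * S).trace = Real.log S.det + (q : ℝ) → Sg = S) := by
  set B := CFC.sqrt S with hBdef
  have hBps : B.PosSemidef := Matrix.nonneg_iff_posSemidef.mp (CFC.sqrt_nonneg S)
  have hBB : B * B = S := CFC.sqrt_mul_sqrt_self S hS.posSemidef.nonneg
  have hBH : Bᴴ = B := hBps.isHermitian
  set M := B * Sg⁻¹ * B with hMdef
  have hMps : M.PosSemidef := by
    have := hSg.inv.posSemidef.mul_mul_conjTranspose_same B
    rwa [hBH] at this
  have hMpd : M.PosDef := by
    refine Matrix.PosDef.of_dotProduct_mulVec_pos hMps.isHermitian (fun v hv => ?_)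
    have hBv : B *ᵥ v ≠ 0 := by
      intro h0
      have hSv : S *ᵥ v = 0 := by
        rw [← hBB, ← mulVec_mulVec, h0, mulVec_zero]
      have := hS.dotProduct_mulVec_pos hv
      rw [hSv] at this
      simp at this
    have hpos := hSg.inv.dotProduct_mulVec_pos hBv
    have hBt : Bᵀ = B := by
      have := hBps.isHermitian
      rwa [Matrix.IsHermitian, conjTranspose_eq_transpose_of_trivial] at this
    have hrw : star v ⬝ᵥ (M *ᵥ v) = star (B *ᵥ v) ⬝ᵥ (Sg⁻¹ *ᵥ (B *ᵥ v)) := by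
      rw [star_trivial, star_trivial, hMdef, ← mulVec_mulVec, ← mulVec_mulVec,
        dotProduct_mulVec, ← mulVec_transpose, hBt]
    rw [hrw]
    exact hpos
  have hdetB : B.det * B.det = S.det := by rw [← det_mul, hBB]
  have hdetBne : B.det ≠ 0 := by
    intro h; rw [h, mul_zero] at hdetB; exact hS.det_pos.ne' hdetB.symm
  have hdetM : M.det = S.det / Sg.det := by
    rw [hMdef, det_mul, det_mul, Matrix.det_nonsing_inv, Ring.inverse_eq_inv', ← hdetB]
    field_simp
  have htr : M.trace = ∑ i, hMps.isHermitian.eigenvalues i := trace_eq_sum_eig _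
  have hdet_eig : M.det = ∏ i, hMps.isHermitian.eigenvalues i := by
    have := hMps.isHermitian.det_eq_prod_eigenvalues
    simpa using this
  have heigpos : ∀ i, 0 < hMps.isHermitian.eigenvalues i := fun i => hMpd.eigenvalues_pos i
  have htrSgS : (Sg⁻¹ * S).trace = M.trace := by
    rw [hMdef, ← hBB, ← mul_assoc, trace_mul_cycle]
  have hlogdet : Real.log Sg.det = Real.log S.det - Real.log M.det := by
    rw [hdetM, Real.log_div hS.det_pos.ne' hSg.det_pos.ne']
    ring
  have hlogM : Real.log M.det = ∑ i, Real.log (hMps.isHermitian.eigenvalues i) := by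
    rw [hdet_eig, Real.log_prod]
    exact fun i _ => (heigpos i).ne'
  have hterm : ∀ i, Real.log (hMps.isHermitian.eigenvalues i) ≤
      hMps.isHermitian.eigenvalues i - 1 :=
    fun i => Real.log_le_sub_one_of_pos (heigpos i)
  constructor
  · rw [htrSgS, hlogdet, htr, hlogM]
    have : ∑ i, Real.log (hMps.isHermitian.eigenvalues i) ≤
        ∑ i, (hMps.isHermitian.eigenvalues i - 1) := Finset.sum_le_sum fun i _ => hterm i
    rw [Finset.sum_sub_distrib] at this
    simp only [Finset.sum_const, Finset.card_univ, Fintype.card_fin, nsmul_eq_mul, mul_one] at this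
    linarith
  · intro heq
    rw [htrSgS, hlogdet, htr, hlogM] at heq
    have hsum0 : ∑ i, (hMps.isHermitian.eigenvalues i - 1 -
        Real.log (hMps.isHermitian.eigenvalues i)) = 0 := by
      rw [Finset.sum_sub_distrib, Finset.sum_sub_distrib]
      simp only [Finset.sum_const, Finset.card_univ, Fintype.card_fin, nsmul_eq_mul, mul_one]
      linarith
    have heig1 : ∀ i, hMps.isHermitian.eigenvalues i = 1 := by
      intro i
      by_contra hne
      have hlt : Real.log (hMps.isHermitian.eigenvalues i) <
          hMps.isHermitian.eigenvalues i - 1 :=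
        Real.log_lt_sub_one_of_pos (heigpos i) hne
      have hpos : ∀ j ∈ Finset.univ, (0:ℝ) ≤ hMps.isHermitian.eigenvalues j - 1 -
          Real.log (hMps.isHermitian.eigenvalues j) := fun j _ => by linarith [hterm j]
      have := Finset.sum_eq_zero_iff_of_nonneg hpos |>.mp hsum0 i (Finset.mem_univ i)
      linarith
    have hM1 : M = 1 := eq_one_of_eig hMps.isHermitian heig1
    have hSSg : S * Sg⁻¹ = 1 := by
      have hBinv : IsUnit B.det := hdetBne.isUnit
      calc S * Sg⁻¹ = B * (B * Sg⁻¹ * B) * B⁻¹ := by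
            rw [mul_assoc, mul_assoc, mul_assoc, Matrix.mul_nonsing_inv B hBinv, mul_one,
              ← mul_assoc, hBB]
        _ = 1 := by rw [← hMdef, hM1, mul_one, Matrix.mul_nonsing_inv B hBinv]
    have hinv : Sg⁻¹ = S⁻¹ := Matrix.inv_eq_right_inv hSSg ▸ rfl
    calc Sg = (Sg⁻¹)⁻¹ := (Matrix.nonsing_inv_nonsing_inv Sg hSg.det_pos.ne'.isUnit).symm
      _ = (S⁻¹)⁻¹ := by rw [hinv]
      _ = S := Matrix.nonsing_inv_nonsing_inv S hS.det_pos.ne'.isUnit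

lemma sum_dot (v : Fin n → Fin q → ℝ) (w : Fin q → ℝ) :
    ∑ i, v i ⬝ᵥ w = (∑ i, v i) ⬝ᵥ w := by
  simp only [dotProduct, Finset.sum_apply, Finset.sum_mul]
  exact Finset.sum_comm

lemma dot_eq_trace (A : Matrix (Fin q) (Fin q) ℝ) (v : Fin q → ℝ) :
    v ⬝ᵥ (A *ᵥ v) = (A * vecMulVec v v).trace := by
  simp only [trace, dotProduct, mulVec, vecMulVec_apply, mul_apply, diag_apply,
    Finset.mul_sum]
  exact Finset.sum_congr rfl fun i _ => Finset.sum_congr rfl fun j _ => by ring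

lemma quad_decomp (A : Matrix (Fin q) (Fin q) ℝ) (x : Fin n → Fin q → ℝ)
    (xbar : Fin q → ℝ) (μ : Fin q → ℝ) (hd0 : ∑ i, (x i - xbar) = 0) :
    ∑ i, (x i - μ) ⬝ᵥ (A *ᵥ (x i - μ)) =
      ∑ i, (x i - xbar) ⬝ᵥ (A *ᵥ (x i - xbar)) +
        (n : ℝ) * ((xbar - μ) ⬝ᵥ (A *ᵥ (xbar - μ))) := by
  have hsplit : ∀ i, x i - μ = (x i - xbar) + (xbar - μ) := fun i => by
    abel
  calc ∑ i, (x i - μ) ⬝ᵥ (A *ᵥ (x i - μ))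
      = ∑ i, ((x i - xbar) ⬝ᵥ (A *ᵥ (x i - xbar))
          + ((x i - xbar) ⬝ᵥ (A *ᵥ (xbar - μ))
          + ((xbar - μ) ⬝ᵥ (A *ᵥ (x i - xbar))
          + (xbar - μ) ⬝ᵥ (A *ᵥ (xbar - μ))))) := by
        refine Finset.sum_congr rfl fun i _ => ?_
        rw [hsplit i, mulVec_add, add_dotProduct, dotProduct_add, dotProduct_add]
        ring
    _ = ∑ i, (x i - xbar) ⬝ᵥ (A *ᵥ (x i - xbar)) +
          (∑ i, (x i - xbar) ⬝ᵥ (A *ᵥ (xbar - μ)) +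
          (∑ i, (xbar - μ) ⬝ᵥ (A *ᵥ (x i - xbar)) +
          ∑ i, (xbar - μ) ⬝ᵥ (A *ᵥ (xbar - μ)))) := by
        rw [Finset.sum_add_distrib, Finset.sum_add_distrib, Finset.sum_add_distrib]
    _ = ∑ i, (x i - xbar) ⬝ᵥ (A *ᵥ (x i - xbar)) +
          (n : ℝ) * ((xbar - μ) ⬝ᵥ (A *ᵥ (xbar - μ))) := by
        have h1 : ∑ i, (x i - xbar) ⬝ᵥ (A *ᵥ (xbar - μ)) = 0 := by
          rw [sum_dot, hd0, zero_dotProduct]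
        have h2 : ∑ i, (xbar - μ) ⬝ᵥ (A *ᵥ (x i - xbar)) = 0 := by
          have : ∀ i, (xbar - μ) ⬝ᵥ (A *ᵥ (x i - xbar))
              = (x i - xbar) ⬝ᵥ (Aᵀ *ᵥ (xbar - μ)) := fun i => by
            rw [dotProduct_mulVec, dotProduct_comm, mulVec_transpose]
          simp_rw [this]
          rw [sum_dot, hd0, zero_dotProduct]
        rw [h1, h2, zero_add, zero_add, Finset.sum_const]
        simp [nsmul_eq_mul]

end Aux

/-- the pair (x̄, Sₙ) uniquely minimizes the Gaussian negative
log-likelihood `l(μ, Σ) = n log det Σ + ∑ᵢ (xᵢ − μ)ᵀ Σ⁻¹ (xᵢ − μ)` over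
`μ ∈ ℝ^q` and positive definite `Σ`, provided `Sₙ` is positive definite. -/
theorem stmt_0 (q n : ℕ) (hn : 0 < n) (x : Fin n → Fin q → ℝ)
    (xbar : Fin q → ℝ) (hxbar : xbar = (n : ℝ)⁻¹ • ∑ i, x i)
    (S : Matrix (Fin q) (Fin q) ℝ)
    (hS : S = (n : ℝ)⁻¹ • ∑ i, vecMulVec (x i - xbar) (x i - xbar))
    (hSpd : S.PosDef)
    (l : (Fin q → ℝ) → Matrix (Fin q) (Fin q) ℝ → ℝ)
    (hl : ∀ (μ : Fin q → ℝ) (Sg : Matrix (Fin q) (Fin q) ℝ),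
      l μ Sg = (n : ℝ) * Real.log Sg.det +
        ∑ i, (x i - μ) ⬝ᵥ (Sg⁻¹ *ᵥ (x i - μ))) :
    (∀ (μ : Fin q → ℝ) (Sg : Matrix (Fin q) (Fin q) ℝ), Sg.PosDef →
      l xbar S ≤ l μ Sg) ∧
    (∀ (μ : Fin q → ℝ) (Sg : Matrix (Fin q) (Fin q) ℝ), Sg.PosDef →
      l μ Sg = l xbar S → μ = xbar ∧ Sg = S) := by
  have hn0 : (0:ℝ) < (n:ℝ) := by exact_mod_cast hn
  have hnne : (n:ℝ) ≠ 0 := hn0.ne'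
  have hd0 : ∑ i, (x i - xbar) = 0 := by
    rw [Finset.sum_sub_distrib, Finset.sum_const, Finset.card_univ, Fintype.card_fin, hxbar,
      ← Nat.cast_smul_eq_nsmul ℝ, smul_smul, mul_inv_cancel₀ hnne, one_smul, sub_self]
  have hSsum : ∑ i, vecMulVec (x i - xbar) (x i - xbar) = (n:ℝ) • S := by
    rw [hS, smul_smul, mul_inv_cancel₀ hnne, one_smul]
  have hquadtr : ∀ A : Matrix (Fin q) (Fin q) ℝ,
      ∑ i, (x i - xbar) ⬝ᵥ (A *ᵥ (x i - xbar)) = (n:ℝ) * (A * S).trace := by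
    intro A
    simp_rw [dot_eq_trace A]
    rw [← trace_sum, ← Finset.mul_sum, hSsum, mul_smul_comm, trace_smul, smul_eq_mul]
  have hformula : ∀ (μ : Fin q → ℝ) (Sg : Matrix (Fin q) (Fin q) ℝ),
      l μ Sg = (n:ℝ) * Real.log Sg.det + ((n:ℝ) * (Sg⁻¹ * S).trace +
        (n:ℝ) * ((xbar - μ) ⬝ᵥ (Sg⁻¹ *ᵥ (xbar - μ)))) := by
    intro μ Sg
    rw [hl, quad_decomp Sg⁻¹ x xbar μ hd0, hquadtr Sg⁻¹]
  have hlbar : l xbar S = (n:ℝ) * (Real.log S.det + (q:ℝ)) := by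
    rw [hformula xbar S, Matrix.nonsing_inv_mul S hSpd.det_pos.ne'.isUnit, trace_one,
      sub_self, mulVec_zero, dotProduct_zero]
    simp [mul_add]
  have hQ : ∀ (μ : Fin q → ℝ) (Sg : Matrix (Fin q) (Fin q) ℝ), Sg.PosDef →
      0 ≤ (xbar - μ) ⬝ᵥ (Sg⁻¹ *ᵥ (xbar - μ)) := by
    intro μ Sg hSg
    rcases eq_or_ne (xbar - μ) 0 with h0 | h0
    · rw [h0, zero_dotProduct]
    · have := hSg.inv.dotProduct_mulVec_pos h0
      rw [star_trivial] at this
      exact this.le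
  constructor
  · intro μ Sg hSg
    rw [hformula μ Sg, hlbar]
    have hk := (key_ineq hSpd hSg).1
    have hQ' := hQ μ Sg hSg
    nlinarith [mul_le_mul_of_nonneg_left hk hn0.le,
      mul_nonneg hn0.le hQ']
  · intro μ Sg hSg heq
    rw [hformula μ Sg, hlbar] at heq
    have hk := (key_ineq hSpd hSg).1
    have hQ' := hQ μ Sg hSg
    have hQ0 : (xbar - μ) ⬝ᵥ (Sg⁻¹ *ᵥ (xbar - μ)) = 0 := by
      nlinarith [mul_le_mul_of_nonneg_left hk hn0.le, mul_nonneg hn0.le hQ']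
    have hkeq : Real.log Sg.det + (Sg⁻¹ * S).trace = Real.log S.det + (q:ℝ) := by
      rw [hQ0, mul_zero, add_zero] at heq
      have : (n:ℝ) * (Real.log Sg.det + (Sg⁻¹ * S).trace) = (n:ℝ) * (Real.log S.det + (q:ℝ)) := by
        linarith [heq]
      exact mul_left_cancel₀ hnne this
    refine ⟨?_, (key_ineq hSpd hSg).2 hkeq⟩
    by_contra hμ
    have h0 : xbar - μ ≠ 0 := by
      intro h; exact hμ (by rw [sub_eq_zero] at h; exact h.symm)
    have := hSg.inv.dotProduct_mulVec_pos h0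
    rw [star_trivial, hQ0] at this
    exact lt_irrefl 0 this
end

section
/- Let λ₁ ≥ ⋯ ≥ λ_q > 0 and d₁ ≥ ⋯ ≥ d_q > 0 be real numbers, let Λ = diag(λ₁, …, λ_q) and D = diag(d₁, …, d_q). Then for every q×q orthogonal matrix H, tr(H Λ⁻¹ Hᵀ D) ≥ tr(Λ⁻¹ D) = Σ_{j=1}^q d_j/λ_j. -/
open Matrix

private lemma abel_aux (a c : ℕ → ℝ) (ha : ∀ i, a (i+1) ≤ a i)
    (hS : ∀ k, 0 ≤ ∑ i ∈ Finset.range k, c i) :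
    ∀ n, a n * (∑ i ∈ Finset.range n, c i) ≤ ∑ i ∈ Finset.range n, a i * c i := by
  intro n
  induction n with
  | zero => simp
  | succ n ih =>
    rw [Finset.sum_range_succ, Finset.sum_range_succ]
    have hS' : 0 ≤ ∑ i ∈ Finset.range n, c i + c n := by
      have := hS (n+1); rwa [Finset.sum_range_succ] at this
    have h1 : a (n+1) * (∑ i ∈ Finset.range n, c i + c n)
        ≤ a n * (∑ i ∈ Finset.range n, c i + c n) :=
      mul_le_mul_of_nonneg_right (ha n) hS'
    nlinarith [ih]

private lemma key_ineq_s3 (q : ℕ) (P : Matrix (Fin q) (Fin q) ℝ) (a b : Fin q → ℝ)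
    (hP : ∀ i j, 0 ≤ P i j) (hrow : ∀ i, ∑ j, P i j = 1) (hcol : ∀ j, ∑ i, P i j = 1)
    (ha : Antitone a) (hapos : ∀ i, 0 ≤ a i) (hb : Monotone b) :
    ∑ i, a i * b i ≤ ∑ i, a i * ∑ j, P i j * b j := by
  set A : ℕ → ℝ := fun i => if h : i < q then a ⟨i, h⟩ else 0 with hA
  set C : ℕ → ℝ := fun i =>
    if h : i < q then (∑ j, P ⟨i, h⟩ j * b j) - b ⟨i, h⟩ else 0 with hC
  have hAanti : ∀ i, A (i+1) ≤ A i := by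
    intro i
    by_cases h1 : i + 1 < q
    · have h0 : i < q := by omega
      simp only [hA, dif_pos h1, dif_pos h0]
      exact ha (by simp [Fin.le_def])
    · by_cases h0 : i < q
      · simp only [hA, dif_neg h1, dif_pos h0]
        exact hapos _
      · simp [hA, dif_neg h1, dif_neg h0]
  -- partial sums of C are nonnegative
  have hSle : ∀ k, k ≤ q → 0 ≤ ∑ i ∈ Finset.range k, C i := by
    intro k hk
    rcases Nat.eq_zero_or_pos k with hk0 | hk0
    · simp [hk0]
    have hq0 : 0 < q := lt_of_lt_of_le hk0 hk
    set t : Fin q := ⟨k - 1, by omega⟩ with ht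
    set M : Fin q → ℝ := fun j => ∑ i ∈ Finset.range k,
      (if h : i < q then P ⟨i, h⟩ j else 0) with hM
    set X : Fin q → ℝ := fun j => if (j : ℕ) < k then 1 else 0 with hX
    -- identity I : sum of C over range k equals ∑_j (M j - X j) * b j
    have hI : ∑ i ∈ Finset.range k, C i = ∑ j, (M j - X j) * b j := by
      have e1 : ∑ i ∈ Finset.range k, C i
          = ∑ i ∈ Finset.range k, ((∑ j, (if h : i < q then P ⟨i, h⟩ j else 0) * b j)
              - (if h : i < q then b ⟨i, h⟩ else 0)) := by
        apply Finset.sum_congr rfl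
        intro i hi
        have hiq : i < q := lt_of_lt_of_le (Finset.mem_range.mp hi) hk
        simp [hC, dif_pos hiq]
      rw [e1, Finset.sum_sub_distrib]
      have e2 : ∑ i ∈ Finset.range k, ∑ j, (if h : i < q then P ⟨i, h⟩ j else 0) * b j
          = ∑ j, M j * b j := by
        rw [Finset.sum_comm]
        apply Finset.sum_congr rfl
        intro j _
        rw [hM, Finset.sum_mul]
      have e3 : ∑ i ∈ Finset.range k, (if h : i < q then b ⟨i, h⟩ else 0)
          = ∑ j, X j * b j := by
        have e4 : ∑ j : Fin q, X j * b j
            = ∑ i ∈ Finset.range q,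
                (if h : i < q then X ⟨i, h⟩ * b ⟨i, h⟩ else 0) := by
          rw [← Fin.sum_univ_eq_sum_range (fun i => if h : i < q then X ⟨i, h⟩ * b ⟨i, h⟩ else 0) q]
          apply Finset.sum_congr rfl
          intro j _
          simp [j.isLt]
        rw [e4]
        rw [← Finset.sum_subset (Finset.range_subset_range.mpr hk)]
        · apply Finset.sum_congr rfl
          intro i hi
          have hik : i < k := Finset.mem_range.mp hi
          have hiq : i < q := lt_of_lt_of_le hik hk
          simp [hX, dif_pos hiq, hik]
        · intro i _ hni
          have hik : ¬ i < k := by simpa using hni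
          by_cases hiq : i < q
          · simp [hX, dif_pos hiq, hik]
          · simp [dif_neg hiq]
      rw [e2, e3, ← Finset.sum_sub_distrib]
      apply Finset.sum_congr rfl
      intro j _
      ring
    -- identity II : ∑_j (M j - X j) = 0
    have hII : ∑ j, (M j - X j) = 0 := by
      have eM : ∑ j, M j = (k : ℝ) := by
        rw [hM, Finset.sum_comm]
        have : ∀ i ∈ Finset.range k,
            ∑ j : Fin q, (if h : i < q then P ⟨i, h⟩ j else 0) = 1 := by
          intro i hi
          have hiq : i < q := lt_of_lt_of_le (Finset.mem_range.mp hi) hk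
          simp only [dif_pos hiq]
          exact hrow _
        rw [Finset.sum_congr rfl this]
        simp
      have eX : ∑ j, X j = (k : ℝ) := by
        have e4 : ∑ j : Fin q, X j
            = ∑ i ∈ Finset.range q, (if i < k then (1:ℝ) else 0) := by
          rw [← Fin.sum_univ_eq_sum_range (fun i => if i < k then (1:ℝ) else 0) q]
        rw [e4, ← Finset.sum_subset (Finset.range_subset_range.mpr hk)
          (by intro i _ h; simp only [Finset.mem_range] at h; simp [h])]
        rw [Finset.sum_congr rfl (fun i hi => if_pos (Finset.mem_range.mp hi))]
        simp
      rw [Finset.sum_sub_distrib, eM, eX, sub_self]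
    -- termwise nonnegativity after centering at b t
    have hcenter : ∑ j, (M j - X j) * b j = ∑ j, (M j - X j) * (b j - b t) := by
      rw [show (∑ j, (M j - X j) * (b j - b t))
          = ∑ j, ((M j - X j) * b j - (M j - X j) * b t) by
        apply Finset.sum_congr rfl; intro j _; ring]
      rw [Finset.sum_sub_distrib, ← Finset.sum_mul, hII]
      ring
    rw [hI, hcenter]
    apply Finset.sum_nonneg
    intro j _
    have hMnonneg : 0 ≤ M j := by
      apply Finset.sum_nonneg
      intro i _
      by_cases hiq : i < q
      · simp only [dif_pos hiq]; exact hP _ _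
      · simp [dif_neg hiq]
    have hMle1 : M j ≤ 1 := by
      have e4 : ∑ i : Fin q, P i j
          = ∑ i ∈ Finset.range q, (if h : i < q then P ⟨i, h⟩ j else 0) := by
        rw [← Fin.sum_univ_eq_sum_range (fun i => if h : i < q then P ⟨i, h⟩ j else 0) q]
        apply Finset.sum_congr rfl
        intro i _
        simp [i.isLt]
      have hsub : M j ≤ ∑ i ∈ Finset.range q, (if h : i < q then P ⟨i, h⟩ j else 0) := by
        apply Finset.sum_le_sum_of_subset_of_nonneg (Finset.range_subset_range.mpr hk)
        intro i _ _
        by_cases hiq : i < q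
        · simp only [dif_pos hiq]; exact hP _ _
        · simp [dif_neg hiq]
      calc M j ≤ _ := hsub
        _ = ∑ i : Fin q, P i j := e4.symm
        _ = 1 := hcol j
    by_cases hjk : (j : ℕ) < k
    · have hbj : b j ≤ b t := hb (by simp [Fin.le_def, ht]; omega)
      have hXj : X j = 1 := by simp [hX, hjk]
      have : M j - X j ≤ 0 := by rw [hXj]; linarith
      nlinarith
    · have hbj : b t ≤ b j := hb (by simp [Fin.le_def, ht]; omega)
      have hXj : X j = 0 := by simp [hX, hjk]
      have : 0 ≤ M j - X j := by rw [hXj]; linarith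
      nlinarith
  have hCzero : ∀ i, q ≤ i → C i = 0 := by
    intro i hi
    simp [hC, dif_neg (by omega : ¬ i < q)]
  have hS : ∀ k, 0 ≤ ∑ i ∈ Finset.range k, C i := by
    intro k
    by_cases hk : k ≤ q
    · exact hSle k hk
    · have : ∑ i ∈ Finset.range k, C i = ∑ i ∈ Finset.range q, C i := by
        symm
        apply Finset.sum_subset (Finset.range_subset_range.mpr (by omega))
        intro i _ hni
        exact hCzero i (by simpa using hni)
      rw [this]
      exact hSle q le_rfl
  have hmain := abel_aux A C hAanti hS q
  have hAq : A q = 0 := by simp [hA]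
  rw [hAq, zero_mul] at hmain
  have hfin : ∑ i ∈ Finset.range q, A i * C i
      = ∑ i : Fin q, a i * ((∑ j, P i j * b j) - b i) := by
    rw [← Fin.sum_univ_eq_sum_range (fun i => A i * C i) q]
    apply Finset.sum_congr rfl
    intro i _
    simp [hA, hC, i.isLt]
  rw [hfin] at hmain
  have : ∑ i : Fin q, a i * ((∑ j, P i j * b j) - b i)
      = (∑ i, a i * ∑ j, P i j * b j) - ∑ i, a i * b i := by
    rw [← Finset.sum_sub_distrib]
    apply Finset.sum_congr rfl
    intro i _
    ring
  rw [this] at hmain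
  linarith

/-- for decreasing positive `λ`, `d` and any orthogonal `H`,
`tr(H Λ⁻¹ Hᵀ D) ≥ tr(Λ⁻¹ D) = ∑ d_j / λ_j`. -/
theorem stmt_3 (q : ℕ) (lam d : Fin q → ℝ)
    (hlam : Antitone lam) (hlampos : ∀ i, 0 < lam i)
    (hd : Antitone d) (hdpos : ∀ i, 0 < d i)
    (H : Matrix (Fin q) (Fin q) ℝ) (hH : Hᵀ * H = 1) :
    ((diagonal lam)⁻¹ * diagonal d).trace ≤
      (H * (diagonal lam)⁻¹ * Hᵀ * diagonal d).trace ∧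
    ((diagonal lam)⁻¹ * diagonal d).trace = ∑ j, d j / lam j := by
  have hinv : (diagonal lam)⁻¹ = diagonal (fun i => (lam i)⁻¹) := by
    apply Matrix.inv_eq_right_inv
    rw [Matrix.diagonal_mul_diagonal]
    have : (fun i => lam i * (lam i)⁻¹) = fun _ : Fin q => (1:ℝ) := by
      funext i; exact mul_inv_cancel₀ (hlampos i).ne'
    rw [this, Matrix.diagonal_one]
  have htr1 : ((diagonal lam)⁻¹ * diagonal d).trace = ∑ j, d j / lam j := by
    rw [hinv, Matrix.diagonal_mul_diagonal, Matrix.trace_diagonal]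
    apply Finset.sum_congr rfl
    intro j _
    rw [div_eq_mul_inv, mul_comm]
  refine ⟨?_, htr1⟩
  -- trace of the conjugated matrix
  have htr2 : (H * (diagonal lam)⁻¹ * Hᵀ * diagonal d).trace
      = ∑ i, d i * ∑ j, (H i j)^2 * (lam j)⁻¹ := by
    rw [hinv]
    simp only [Matrix.trace, Matrix.diag, Matrix.mul_apply, Matrix.transpose_apply,
      Matrix.diagonal_apply, Finset.sum_ite_eq, Finset.mem_univ, if_true, mul_ite,
      mul_zero, Finset.sum_ite_eq']
    congr 1; funext i
    rw [Finset.sum_mul, Finset.mul_sum]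
    congr 1; funext j
    ring
  have hHH : H * Hᵀ = 1 := mul_eq_one_comm.mp hH
  have hrow : ∀ i, ∑ j, (H i j)^2 = 1 := by
    intro i
    have := congrFun (congrFun hHH i) i
    simp [Matrix.mul_apply, Matrix.transpose_apply, Matrix.one_apply] at this
    rw [← this]
    apply Finset.sum_congr rfl
    intro j _
    ring
  have hcol : ∀ j, ∑ i, (H i j)^2 = 1 := by
    intro j
    have := congrFun (congrFun hH j) j
    simp [Matrix.mul_apply, Matrix.transpose_apply, Matrix.one_apply] at this
    rw [← this]
    apply Finset.sum_congr rfl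
    intro i _
    ring
  have hb : Monotone (fun i => (lam i)⁻¹) := by
    intro i j hij
    exact inv_anti₀ (hlampos j) (hlam hij)
  have hkey := key_ineq_s3 q (fun i j => (H i j)^2) d (fun i => (lam i)⁻¹)
    (fun i j => sq_nonneg _) hrow hcol hd (fun i => (hdpos i).le) hb
  rw [htr1, htr2]
  calc ∑ j, d j / lam j = ∑ i, d i * (lam i)⁻¹ := by
        apply Finset.sum_congr rfl; intro j _; rw [div_eq_mul_inv]
    _ ≤ ∑ i, d i * ∑ j, (H i j)^2 * (lam j)⁻¹ := hkey
end

section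
/- Let Π be a function on the q×q real symmetric positive definite matrices satisfying Π(QΣQᵀ) = Π(Σ) for all orthogonal Q. Let S be positive definite with spectral decomposition S = P D Pᵀ, where P is orthogonal and D = diag(d₁, …, d_q) with d₁ ≥ ⋯ ≥ d_q > 0 the eigenvalues of S in decreasing order. Let Σ be any positive definite matrix with eigenvalues λ₁(Σ) ≥ ⋯ ≥ λ_q(Σ) in decreasing order, and set Λ = diag(λ₁(Σ), …, λ_q(Σ)). Then for every η ≥ 0, L(Σ; S, η) ≥ L(P Λ Pᵀ; S, η), where L(Σ; S, η) = tr(Σ⁻¹S) + log det(Σ) + η·Π(Σ). -/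
open Matrix

/-- The eigenvalues of a Hermitian real matrix, sorted in decreasing order. -/
noncomputable def eigsDesc {q : ℕ} (A : Matrix (Fin q) (Fin q) ℝ)
    (hA : A.IsHermitian) : Fin q → ℝ :=
  fun i => (hA.eigenvalues ∘ Tuple.sort hA.eigenvalues) i.rev

section Aux

open Finset

/-- Conjugation by an orthogonal matrix with a diagonal: inverse formula. -/
lemma conj_diag_inv {q : ℕ} (V : Matrix (Fin q) (Fin q) ℝ) (hV : Vᵀ * V = 1)
    (lam : Fin q → ℝ) (hlam : ∀ i, lam i ≠ 0) :
    (V * diagonal lam * Vᵀ)⁻¹ = V * diagonal (fun i => (lam i)⁻¹) * Vᵀ := by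
  have hVVt : V * Vᵀ = 1 := mul_eq_one_comm.mp hV
  have hdiag : diagonal lam * diagonal (fun i => (lam i)⁻¹) = 1 := by
    have h1 : (fun i => lam i * (lam i)⁻¹) = fun _ => (1 : ℝ) :=
      funext fun i => mul_inv_cancel₀ (hlam i)
    rw [diagonal_mul_diagonal, h1, diagonal_one]
  apply Matrix.inv_eq_right_inv
  calc V * diagonal lam * Vᵀ * (V * diagonal (fun i => (lam i)⁻¹) * Vᵀ)
      = V * diagonal lam * (Vᵀ * V) * (diagonal (fun i => (lam i)⁻¹) * Vᵀ) := by
        simp only [Matrix.mul_assoc]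
    _ = V * (diagonal lam * diagonal (fun i => (lam i)⁻¹)) * Vᵀ := by
        rw [hV]; simp only [Matrix.mul_one, Matrix.mul_assoc]
    _ = 1 := by rw [hdiag, Matrix.mul_one, hVVt]

/-- Spectral decomposition of a real symmetric matrix with decreasingly sorted
eigenvalues. -/
lemma exists_orth_spectral {q : ℕ} (A : Matrix (Fin q) (Fin q) ℝ) (hA : A.IsHermitian) :
    ∃ V : Matrix (Fin q) (Fin q) ℝ, Vᵀ * V = 1 ∧
      A = V * diagonal (eigsDesc A hA) * Vᵀ := by
  set v := hA.eigenvalues with hv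
  set τ : Equiv.Perm (Fin q) := (Fin.revPerm).trans (Tuple.sort v) with hτ
  have heig : eigsDesc A hA = fun i => v (τ i) := by
    funext i
    simp [eigsDesc, hτ, Function.comp]
    rfl
  set U : Matrix (Fin q) (Fin q) ℝ := (hA.eigenvectorUnitary : Matrix (Fin q) (Fin q) ℝ)
    with hU
  have hspec : A = U * diagonal v * Uᵀ := by
    have := hA.spectral_theorem
    rwa [Unitary.conjStarAlgAut_apply, Matrix.star_eq_conjTranspose,
      Matrix.conjTranspose_eq_transpose_of_trivial] at this
  have hUtU : Uᵀ * U = 1 := by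
    have h := Unitary.coe_star_mul_self hA.eigenvectorUnitary
    rwa [Matrix.star_eq_conjTranspose, Matrix.conjTranspose_eq_transpose_of_trivial] at h
  have key : ∀ a b, ∑ k, U k a * U k b = if a = b then (1 : ℝ) else 0 := by
    intro a b
    have h := congrFun (congrFun hUtU a) b
    simpa [Matrix.mul_apply, Matrix.transpose_apply, Matrix.one_apply] using h
  refine ⟨U.submatrix id τ, ?_, ?_⟩
  · ext i j
    have : ((U.submatrix id ⇑τ)ᵀ * U.submatrix id ⇑τ) i j
        = ∑ k, U k (τ i) * U k (τ j) := by
      simp [Matrix.mul_apply, Matrix.transpose_apply, Matrix.submatrix_apply]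
    rw [this, key, Matrix.one_apply]
    simp [τ.injective.eq_iff]
  · have happ : ∀ (M : Matrix (Fin q) (Fin q) ℝ) (w : Fin q → ℝ) a b,
        (M * diagonal w * Mᵀ) a b = ∑ k, M a k * w k * M b k := by
      intro M w a b
      rw [Matrix.mul_apply]
      simp only [Matrix.mul_diagonal, Matrix.transpose_apply]
    apply Matrix.ext
    intro a b
    conv_lhs => rw [hspec]
    rw [happ, happ, heig]
    exact (Fintype.sum_equiv τ _ _ (fun i => by
      simp [Matrix.submatrix_apply])).symm

/-- Lower bound for a bilinear form over doubly stochastic matrices, via Birkhoff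
and the rearrangement inequality. -/
lemma ds_bound {q : ℕ} (g d : Fin q → ℝ) (hgd : Antivary g d)
    (C : Matrix (Fin q) (Fin q) ℝ) (hC : C ∈ doublyStochastic ℝ (Fin q)) :
    ∑ i, g i * d i ≤ ∑ i, ∑ j, g i * d j * C i j := by
  obtain ⟨w, hw0, hw1, hwsum⟩ := exists_eq_sum_perm_of_mem_doublyStochastic hC
  have hperm : ∀ σ : Equiv.Perm (Fin q),
      ∑ i, ∑ j, g i * d j * (σ.permMatrix ℝ) i j = ∑ i, g i * d (σ i) := by
    intro σ
    refine Finset.sum_congr rfl fun i _ => ?_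
    rw [Finset.sum_eq_single (σ i)]
    · simp [Equiv.Perm.permMatrix, PEquiv.toMatrix_apply, Equiv.toPEquiv_apply]
    · intro j _ hj
      simp [Equiv.Perm.permMatrix, PEquiv.toMatrix_apply, Equiv.toPEquiv_apply, hj.symm]
    · simp
  calc ∑ i, g i * d i = ∑ σ : Equiv.Perm (Fin q), w σ * ∑ i, g i * d i := by
        rw [← Finset.sum_mul, hw1, one_mul]
    _ ≤ ∑ σ : Equiv.Perm (Fin q), w σ * ∑ i, g i * d (σ i) := by
        refine Finset.sum_le_sum fun σ _ => ?_
        exact mul_le_mul_of_nonneg_left (hgd.sum_mul_le_sum_mul_comp_perm) (hw0 σ)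
    _ = ∑ σ : Equiv.Perm (Fin q), w σ * ∑ i, ∑ j, g i * d j * (σ.permMatrix ℝ) i j := by
        exact Finset.sum_congr rfl fun σ _ => by rw [hperm σ]
    _ = ∑ i, ∑ j, g i * d j * C i j := by
        rw [← hwsum]
        calc ∑ σ : Equiv.Perm (Fin q), w σ * ∑ i, ∑ j, g i * d j * (σ.permMatrix ℝ) i j
            = ∑ σ : Equiv.Perm (Fin q), ∑ i, ∑ j,
                w σ * (g i * d j * (σ.permMatrix ℝ) i j) := by
              simp only [Finset.mul_sum]
          _ = ∑ i, ∑ σ : Equiv.Perm (Fin q), ∑ j,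
                w σ * (g i * d j * (σ.permMatrix ℝ) i j) := Finset.sum_comm
          _ = ∑ i, ∑ j, ∑ σ : Equiv.Perm (Fin q),
                w σ * (g i * d j * (σ.permMatrix ℝ) i j) :=
              Finset.sum_congr rfl fun i _ => Finset.sum_comm
          _ = ∑ i, ∑ j, g i * d j *
                (∑ σ : Equiv.Perm (Fin q), w σ • σ.permMatrix ℝ) i j := by
              refine Finset.sum_congr rfl fun i _ => Finset.sum_congr rfl fun j _ => ?_
              rw [Matrix.sum_apply, Finset.mul_sum]
              refine Finset.sum_congr rfl fun σ _ => ?_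
              rw [Matrix.smul_apply, smul_eq_mul]
              ring

end Aux

/-- for an orthogonally invariant penalty `Π`, a positive definite `S`
with spectral decomposition `S = P D Pᵀ` (eigenvalues decreasing), and any positive
definite `Σ` with decreasingly ordered eigenvalue matrix `Λ`, one has
`L(Σ; S, η) ≥ L(P Λ Pᵀ; S, η)` where `L(Σ; S, η) = tr(Σ⁻¹S) + log det Σ + η Π(Σ)`. -/
theorem stmt_4 (q : ℕ) (Pen : Matrix (Fin q) (Fin q) ℝ → ℝ)
    (hPen : ∀ (A : Matrix (Fin q) (Fin q) ℝ), A.PosDef →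
      ∀ Q : Matrix (Fin q) (Fin q) ℝ, Qᵀ * Q = 1 → Pen (Q * A * Qᵀ) = Pen A)
    (S P : Matrix (Fin q) (Fin q) ℝ) (d : Fin q → ℝ)
    (hP : Pᵀ * P = 1) (hdanti : Antitone d) (hdpos : ∀ i, 0 < d i)
    (hSdec : S = P * diagonal d * Pᵀ)
    (A : Matrix (Fin q) (Fin q) ℝ) (hA : A.PosDef)
    (η : ℝ) (hη : 0 ≤ η)
    (L : Matrix (Fin q) (Fin q) ℝ → ℝ)
    (hL : ∀ B : Matrix (Fin q) (Fin q) ℝ,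
      L B = (B⁻¹ * S).trace + Real.log B.det + η * Pen B) :
    L (P * diagonal (eigsDesc A hA.isHermitian) * Pᵀ) ≤ L A := by
  set lam : Fin q → ℝ := eigsDesc A hA.isHermitian with hlamdef
  have hlampos : ∀ i, 0 < lam i := fun i => hA.eigenvalues_pos _
  have hlamanti : Antitone lam := by
    intro i j hij
    exact Tuple.monotone_sort hA.isHermitian.eigenvalues (Fin.rev_le_rev.mpr hij)
  have hlamne : ∀ i, lam i ≠ 0 := fun i => (hlampos i).ne'
  set g : Fin q → ℝ := fun i => (lam i)⁻¹ with hgdef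
  have hgmono : Monotone g := fun i j hij =>
    inv_anti₀ (hlampos j) (hlamanti hij)
  obtain ⟨V, hV, hAV⟩ := exists_orth_spectral A hA.isHermitian
  have hVVt : V * Vᵀ = 1 := mul_eq_one_comm.mp hV
  have hPPt : P * Pᵀ = 1 := mul_eq_one_comm.mp hP
  have hLampd : (diagonal lam).PosDef := Matrix.posDef_diagonal_iff.mpr hlampos
  -- determinants
  have hdVV : V.det * Vᵀ.det = 1 := by rw [mul_comm, ← Matrix.det_mul, hV, Matrix.det_one]
  have hdPP : P.det * Pᵀ.det = 1 := by rw [mul_comm, ← Matrix.det_mul, hP, Matrix.det_one]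
  have hdetA : A.det = (diagonal lam).det := by
    rw [hAV, Matrix.det_mul, Matrix.det_mul]
    calc V.det * (diagonal lam).det * Vᵀ.det
        = V.det * Vᵀ.det * (diagonal lam).det := by ring
      _ = (diagonal lam).det := by rw [hdVV, one_mul]
  have hdetB : (P * diagonal lam * Pᵀ).det = (diagonal lam).det := by
    rw [Matrix.det_mul, Matrix.det_mul]
    calc P.det * (diagonal lam).det * Pᵀ.det
        = P.det * Pᵀ.det * (diagonal lam).det := by ring
      _ = (diagonal lam).det := by rw [hdPP, one_mul]
  -- penalties
  have hPenA : Pen A = Pen (diagonal lam) := by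
    conv_lhs => rw [hAV]
    exact hPen (diagonal lam) hLampd V hV
  have hPenB : Pen (P * diagonal lam * Pᵀ) = Pen (diagonal lam) :=
    hPen (diagonal lam) hLampd P hP
  -- inverses
  have hAinv : A⁻¹ = V * diagonal g * Vᵀ := by
    rw [hAV]; exact conj_diag_inv V hV lam hlamne
  have hBinv : (P * diagonal lam * Pᵀ)⁻¹ = P * diagonal g * Pᵀ :=
    conj_diag_inv P hP lam hlamne
  -- trace of the candidate
  have htrB : ((P * diagonal lam * Pᵀ)⁻¹ * S).trace = ∑ i, g i * d i := by
    rw [hBinv, hSdec]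
    have h1 : P * diagonal g * Pᵀ * (P * diagonal d * Pᵀ)
        = P * (diagonal g * diagonal d) * Pᵀ := by
      calc P * diagonal g * Pᵀ * (P * diagonal d * Pᵀ)
          = P * diagonal g * (Pᵀ * P) * (diagonal d * Pᵀ) := by
            simp only [Matrix.mul_assoc]
        _ = P * (diagonal g * diagonal d) * Pᵀ := by
            rw [hP]; simp only [Matrix.mul_one, Matrix.mul_assoc]
    rw [h1, Matrix.trace_mul_comm, ← Matrix.mul_assoc, hP, Matrix.one_mul,
      diagonal_mul_diagonal, Matrix.trace_diagonal]
  -- trace of A⁻¹ S as a bilinear form in the doubly stochastic matrix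
  set W : Matrix (Fin q) (Fin q) ℝ := Vᵀ * P with hWdef
  have hWWt : W * Wᵀ = 1 := by
    rw [hWdef, Matrix.transpose_mul, Matrix.transpose_transpose]
    calc Vᵀ * P * (Pᵀ * V) = Vᵀ * (P * Pᵀ * V) := by simp only [Matrix.mul_assoc]
      _ = 1 := by rw [hPPt, Matrix.one_mul, hV]
  have hWtW : Wᵀ * W = 1 := mul_eq_one_comm.mp hWWt
  have htrA : (A⁻¹ * S).trace = ∑ i, ∑ j, g i * d j * (W i j) ^ 2 := by
    rw [hAinv, hSdec]
    have h1 : V * diagonal g * Vᵀ * (P * diagonal d * Pᵀ)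
        = V * (diagonal g * (Vᵀ * (P * diagonal d * Pᵀ))) := by
      simp only [Matrix.mul_assoc]
    rw [h1, Matrix.trace_mul_comm]
    have h2 : diagonal g * (Vᵀ * (P * diagonal d * Pᵀ)) * V
        = diagonal g * (W * diagonal d * Wᵀ) := by
      rw [hWdef, Matrix.transpose_mul, Matrix.transpose_transpose]
      simp only [Matrix.mul_assoc]
    rw [h2]
    rw [Matrix.trace]
    refine Finset.sum_congr rfl fun i _ => ?_
    rw [Matrix.diag_apply, Matrix.diagonal_mul, Matrix.mul_apply, Finset.mul_sum]
    refine Finset.sum_congr rfl fun j _ => ?_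
    rw [Matrix.mul_diagonal, Matrix.transpose_apply]
    ring
  -- the squared entries form a doubly stochastic matrix
  have hCmem : (Matrix.of fun i j => (W i j) ^ 2) ∈ doublyStochastic ℝ (Fin q) := by
    rw [mem_doublyStochastic_iff_sum]
    refine ⟨fun i j => by simpa using sq_nonneg (W i j), fun i => ?_, fun j => ?_⟩
    · have h := congrFun (congrFun hWWt i) i
      simpa [Matrix.mul_apply, Matrix.transpose_apply, Matrix.one_apply, sq] using h
    · have h := congrFun (congrFun hWtW j) j
      simpa [Matrix.mul_apply, Matrix.transpose_apply, Matrix.one_apply, sq] using h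
  have hkey : ∑ i, g i * d i ≤ ∑ i, ∑ j, g i * d j * (W i j) ^ 2 := by
    have := ds_bound g d (hgmono.antivary hdanti) _ hCmem
    simpa using this
  rw [hL, hL, htrB, htrA, hdetA, hdetB, hPenA, hPenB]
  linarith
end

section
/- Let Π be a nonnegative function on the q×q real symmetric positive definite matrices such that Π(Σ) = π(log λ₁(Σ), …, log λ_q(Σ)) for a convex, permutation-invariant π : ℝ^q → ℝ, where λ₁(Σ) ≥ ⋯ ≥ λ_q(Σ) are the eigenvalues of Σ in decreasing order. Let S be positive definite, set κ_L = inf{Π(Σ) : Σ positive definite} and κ_U = Π(S), and let l(Σ; S) = tr(Σ⁻¹S) + log det(Σ). For η ≥ 0 let Σ̂_η be the unique minimizer over positive definite Σ of l(Σ; S) + η·Π(Σ). Then: (i) for every κ with κ_L < κ ≤ κ_U there is a unique minimizer Σ̃_κ of l(Σ; S) over the set {Σ positive definite : Π(Σ) ≤ κ}; (ii) the map κ ↦ Σ̃_κ is continuous on (κ_L, κ_U]; (iii) for every η ≥ 0 with Π(Σ̂_η) > κ_L one has Σ̂_η = Σ̃_{Π(Σ̂_η)}; and (iv) for every κ ∈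 (κ_L, κ_U] there exists η ≥ 0 with Σ̃_κ = Σ̂_η. -/
open Matrix

lemma eigsDesc_antitone {q : ℕ} {A : Matrix (Fin q) (Fin q) ℝ} (hA : A.IsHermitian) :
    Antitone (eigsDesc A hA) := by
  intro i j hij
  exact Tuple.monotone_sort hA.eigenvalues (Fin.rev_le_rev.mpr hij)

lemma card_filter_lt (q k : ℕ) (hk : k ≤ q) :
    (Finset.univ.filter (fun i : Fin q => (i : ℕ) < k)).card = k := by
  have h : Finset.univ.filter (fun i : Fin q => (i : ℕ) < k)
      = Finset.map (Fin.castLEEmb hk) Finset.univ := by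
    ext j
    simp only [Finset.mem_filter, Finset.mem_univ, true_and, Finset.mem_map]
    constructor
    · intro h
      exact ⟨⟨j, h⟩, rfl⟩
    · rintro ⟨i, rfl⟩
      exact i.2
  rw [h, Finset.card_map, Finset.card_univ, Fintype.card_fin]

lemma rearrange {q : ℕ} (lam c : Fin q → ℝ) (hmono : Antitone lam)
    (h0 : ∀ i, 0 ≤ c i) (h1 : ∀ i, c i ≤ 1) (k : ℕ) (hk : k ≤ q)
    (hsum : ∑ i, c i = k) :
    ∑ i, lam i * c i ≤ ∑ i ∈ Finset.univ.filter (fun i : Fin q => (i : ℕ) < k), lam i := by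
  by_cases hkq : k < q
  · -- k < q
    set p := lam ⟨k, hkq⟩ with hp
    have hcard := card_filter_lt q k hk
    have hsplit := Finset.sum_filter_add_sum_filter_not Finset.univ
      (fun i : Fin q => (i : ℕ) < k) c
    have hA : ∑ i ∈ Finset.univ.filter (fun i : Fin q => (i : ℕ) < k), lam i * c i
        ≤ ∑ i ∈ Finset.univ.filter (fun i : Fin q => (i : ℕ) < k), (lam i + p * (c i - 1)) := by
      apply Finset.sum_le_sum
      intro i hi
      simp only [Finset.mem_filter] at hi
      have hle : p ≤ lam i := hmono (by rw [Fin.le_def]; exact Nat.le_of_lt_succ (Nat.lt_succ_of_lt hi.2))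
      nlinarith [h1 i, h0 i]
    have hB : ∑ i ∈ Finset.univ.filter (fun i : Fin q => ¬ ((i : ℕ) < k)), lam i * c i
        ≤ ∑ i ∈ Finset.univ.filter (fun i : Fin q => ¬ ((i : ℕ) < k)), p * c i := by
      apply Finset.sum_le_sum
      intro i hi
      simp only [Finset.mem_filter, not_lt] at hi
      have hle : lam i ≤ p := hmono (by rw [Fin.le_def]; exact hi.2)
      exact mul_le_mul_of_nonneg_right hle (h0 i)
    have heq : ∑ i ∈ Finset.univ.filter (fun i : Fin q => (i : ℕ) < k), (lam i + p * (c i - 1))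
        + ∑ i ∈ Finset.univ.filter (fun i : Fin q => ¬ ((i : ℕ) < k)), p * c i
        = ∑ i ∈ Finset.univ.filter (fun i : Fin q => (i : ℕ) < k), lam i
          + p * ((∑ i, c i) - k) := by
      rw [Finset.sum_add_distrib, ← Finset.mul_sum, ← Finset.mul_sum,
        Finset.sum_sub_distrib, Finset.sum_const, hcard, ← hsplit]
      simp only [nsmul_eq_mul, mul_one]
      ring
    calc ∑ i, lam i * c i
        = ∑ i ∈ Finset.univ.filter (fun i : Fin q => (i : ℕ) < k), lam i * c i
          + ∑ i ∈ Finset.univ.filter (fun i : Fin q => ¬ ((i : ℕ) < k)), lam i * c i :=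
          (Finset.sum_filter_add_sum_filter_not Finset.univ _ _).symm
      _ ≤ _ := add_le_add hA hB
      _ = _ := heq
      _ = ∑ i ∈ Finset.univ.filter (fun i : Fin q => (i : ℕ) < k), lam i := by
          rw [hsum]; ring
  · -- k = q
    have hkq' : k = q := le_antisymm hk (not_lt.1 hkq)
    have hzero : ∑ i : Fin q, (1 - c i) = 0 := by
      rw [Finset.sum_sub_distrib, hsum, hkq']
      simp
    have hall : ∀ i, c i = 1 := by
      intro i
      have := (Finset.sum_eq_zero_iff_of_nonneg
        (fun j _ => by linarith [h1 j])).mp hzero i (Finset.mem_univ i)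
      linarith
    have hfilter : Finset.univ.filter (fun i : Fin q => (i : ℕ) < k) = Finset.univ := by
      ext i
      simp [hkq', i.2]
    rw [hfilter]
    apply le_of_eq
    exact Finset.sum_congr rfl (fun i _ => by rw [hall i, mul_one])

noncomputable def lamVec {q : ℕ} (A : Matrix (Fin q) (Fin q) ℝ) : Fin q → ℝ :=
  if h : A.IsHermitian then eigsDesc A h else 0

lemma lamVec_eq {q : ℕ} {A : Matrix (Fin q) (Fin q) ℝ} (hA : A.IsHermitian) :
    lamVec A = eigsDesc A hA := dif_pos hA

noncomputable def sTop {q : ℕ} (k : ℕ) (A : Matrix (Fin q) (Fin q) ℝ) : ℝ :=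
  ∑ i ∈ Finset.univ.filter (fun i : Fin q => (i : ℕ) < k), lamVec A i

/-- spectral decomposition over ℝ -/
lemma spectral_real {q : ℕ} {A : Matrix (Fin q) (Fin q) ℝ} (hA : A.IsHermitian) :
    A = (hA.eigenvectorUnitary : Matrix (Fin q) (Fin q) ℝ) * diagonal hA.eigenvalues
      * star (hA.eigenvectorUnitary : Matrix (Fin q) (Fin q) ℝ) := by
  have h := hA.spectral_theorem
  have h2 : (RCLike.ofReal ∘ hA.eigenvalues : Fin q → ℝ) = hA.eigenvalues := by funext i; simp
  rwa [h2] at h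

lemma trace_diagonal_mul {q : ℕ} (d : Fin q → ℝ) (M : Matrix (Fin q) (Fin q) ℝ) :
    (diagonal d * M).trace = ∑ i, d i * M i i := by
  simp [Matrix.trace, Matrix.diag, Matrix.diagonal_mul]

lemma trace_conj {q : ℕ} (U X : Matrix (Fin q) (Fin q) ℝ) (hU : star U * U = 1) :
    (U * X * star U).trace = X.trace := by
  rw [Matrix.trace_mul_comm (U * X) (star U), ← Matrix.mul_assoc, hU, Matrix.one_mul]

/-- Key Lipschitz-type bound for partial sums of decreasing eigenvalues. -/
lemma sTop_le {q : ℕ} (k : ℕ) (hk : k ≤ q) {A B : Matrix (Fin q) (Fin q) ℝ}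
    (hA : A.IsHermitian) (hB : B.IsHermitian) :
    sTop k A ≤ sTop k B + q * ∑ a, ∑ b, |(A - B) a b| := by
  classical
  set U : Matrix (Fin q) (Fin q) ℝ := (hA.eigenvectorUnitary : Matrix (Fin q) (Fin q) ℝ) with hUdef
  set V : Matrix (Fin q) (Fin q) ℝ := (hB.eigenvectorUnitary : Matrix (Fin q) (Fin q) ℝ) with hVdef
  have hU1 : star U * U = 1 := mem_unitaryGroup_iff'.mp hA.eigenvectorUnitary.2
  have hU2 : U * star U = 1 := mem_unitaryGroup_iff.mp hA.eigenvectorUnitary.2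
  have hV1 : star V * V = 1 := mem_unitaryGroup_iff'.mp hB.eigenvectorUnitary.2
  have hV2 : V * star V = 1 := mem_unitaryGroup_iff.mp hB.eigenvectorUnitary.2
  set lam := hA.eigenvalues with hlam
  set mu := hB.eigenvalues with hmu
  have hAeq : A = U * diagonal lam * star U := spectral_real hA
  have hBeq : B = V * diagonal mu * star V := spectral_real hB
  set e := Tuple.sort hA.eigenvalues with he
  set T : Finset (Fin q) :=
    (Finset.univ.filter (fun i : Fin q => (i : ℕ) < k)).image (fun i => e i.rev) with hT
  have hinj : Function.Injective (fun i : Fin q => e i.rev) :=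
    fun x y hxy => Fin.rev_injective (e.injective hxy)
  have hTcard : T.card = k := by
    rw [hT, Finset.card_image_of_injective _ hinj, card_filter_lt q k hk]
  set ind : Fin q → ℝ := fun j => if j ∈ T then 1 else 0 with hind
  set P : Matrix (Fin q) (Fin q) ℝ := U * diagonal ind * star U with hP
  set W : Matrix (Fin q) (Fin q) ℝ := star V * U with hW
  have hWstar : star W = star U * V := by rw [hW, StarMul.star_mul, star_star]
  have hW1 : star W * W = 1 := by
    rw [hWstar, hW, Matrix.mul_assoc, ← Matrix.mul_assoc V (star V) U, hV2, Matrix.one_mul, hU1]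
  have hW2 : W * star W = 1 := by
    rw [hWstar, hW, Matrix.mul_assoc, ← Matrix.mul_assoc U (star U) V, hU2, Matrix.one_mul, hV1]
  -- Step 1 : trace (P * A) = sTop k A
  have step1 : (P * A).trace = sTop k A := by
    have h1 : P * A = U * (diagonal ind * diagonal lam) * star U := by
      rw [hP, hAeq]
      simp only [Matrix.mul_assoc]
      rw [← Matrix.mul_assoc (star U) U (diagonal lam * star U), hU1, Matrix.one_mul]
    rw [h1, trace_conj _ _ hU1, diagonal_mul_diagonal, Matrix.trace_diagonal]
    have h2 : ∑ i, ind i * lam i = ∑ i ∈ T, lam i := by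
      rw [hind]
      simp only [ite_mul, one_mul, zero_mul]
      rw [Finset.sum_ite_mem, Finset.univ_inter]
    rw [h2, hT, Finset.sum_image (fun x _ y _ hxy => hinj hxy)]
    rw [sTop]
    apply Finset.sum_congr rfl
    intro i _
    rw [lamVec_eq hA]
    rfl
  -- c j = ∑ i in T, W j i * W j i
  set c : Fin q → ℝ := fun j => ∑ i ∈ T, W j i * W j i with hc
  have hc0 : ∀ j, 0 ≤ c j := fun j => Finset.sum_nonneg (fun i _ => mul_self_nonneg _)
  have hc1 : ∀ j, c j ≤ 1 := by
    intro j
    have h1 : c j ≤ ∑ i, W j i * W j i :=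
      Finset.sum_le_sum_of_subset_of_nonneg (Finset.subset_univ T)
        (fun i _ _ => mul_self_nonneg _)
    have h2 : ∑ i, W j i * W j i = (W * star W) j j := by
      rw [Matrix.mul_apply]
      apply Finset.sum_congr rfl
      intro i _
      rw [Matrix.star_apply, star_trivial]
    rw [h2, hW2] at h1
    simpa using h1
  have hcsum : ∑ j, c j = k := by
    rw [hc]
    rw [Finset.sum_comm]
    have h1 : ∀ i, ∑ j, W j i * W j i = (star W * W) i i := by
      intro i
      rw [Matrix.mul_apply]
      apply Finset.sum_congr rfl
      intro j _
      rw [Matrix.star_apply, star_trivial]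
    calc ∑ i ∈ T, ∑ j, W j i * W j i = ∑ i ∈ T, (star W * W) i i :=
          Finset.sum_congr rfl (fun i _ => h1 i)
      _ = ∑ i ∈ T, (1 : ℝ) := Finset.sum_congr rfl (fun i _ => by rw [hW1]; simp)
      _ = k := by rw [Finset.sum_const, hTcard]; simp
  -- Step 2 : trace (P * B) = ∑ j, mu j * c j ≤ sTop k B
  have step2eq : (P * B).trace = ∑ j, mu j * c j := by
    have h2 : P * B = U * (diagonal ind * (star W * diagonal mu * W)) * star U := by
      rw [hP, hBeq, hWstar, hW]
      simp only [Matrix.mul_assoc]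
      rw [hU2, Matrix.mul_one]
    rw [h2, trace_conj _ _ hU1, trace_diagonal_mul]
    have h3 : ∀ i, (star W * diagonal mu * W) i i = ∑ j, mu j * (W j i * W j i) := by
      intro i
      rw [Matrix.mul_assoc, Matrix.mul_apply]
      apply Finset.sum_congr rfl
      intro j _
      rw [Matrix.star_apply, star_trivial, Matrix.diagonal_mul]
      ring
    calc ∑ i, ind i * (star W * diagonal mu * W) i i
        = ∑ i ∈ T, (star W * diagonal mu * W) i i := by
          rw [hind]; simp only [ite_mul, one_mul, zero_mul]
          rw [Finset.sum_ite_mem, Finset.univ_inter]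
      _ = ∑ i ∈ T, ∑ j, mu j * (W j i * W j i) := Finset.sum_congr rfl (fun i _ => h3 i)
      _ = ∑ j, ∑ i ∈ T, mu j * (W j i * W j i) := Finset.sum_comm
      _ = ∑ j, mu j * c j := by
          apply Finset.sum_congr rfl
          intro j _
          rw [hc, Finset.mul_sum]
  have step2le : ∑ j, mu j * c j ≤ sTop k B := by
    set perm : Equiv.Perm (Fin q) := Fin.revPerm.trans (Tuple.sort hB.eigenvalues) with hperm
    have hre : ∑ j, mu j * c j = ∑ i, eigsDesc B hB i * c (perm i) := by
      rw [← Equiv.sum_comp perm (fun j => mu j * c j)]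
      rfl
    have hcs : ∑ i, c (perm i) = k := by
      rw [Equiv.sum_comp perm c, hcsum]
    rw [hre]
    have := rearrange (eigsDesc B hB) (fun i => c (perm i)) (eigsDesc_antitone hB)
      (fun i => hc0 _) (fun i => hc1 _) k hk hcs
    calc ∑ i, eigsDesc B hB i * c (perm i)
        ≤ ∑ i ∈ Finset.univ.filter (fun i : Fin q => (i : ℕ) < k), eigsDesc B hB i := this
      _ = sTop k B := by
          rw [sTop]
          exact Finset.sum_congr rfl (fun i _ => by rw [lamVec_eq hB])
  -- Step 3 : |trace (P * M)| ≤ q * N for M = A - B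
  set M : Matrix (Fin q) (Fin q) ℝ := A - B with hM
  set N : ℝ := ∑ a, ∑ b, |M a b| with hN
  have hN0 : 0 ≤ N := Finset.sum_nonneg fun a _ => Finset.sum_nonneg fun b _ => abs_nonneg _
  have hUentry : ∀ a i, |U a i| ≤ 1 := by
    intro a i
    rw [abs_le_one_iff_mul_self_le_one]
    have h1 : ∑ a', U a' i * U a' i = (star U * U) i i := by
      rw [Matrix.mul_apply]
      apply Finset.sum_congr rfl
      intro a' _
      rw [Matrix.star_apply, star_trivial]
    have h2 : U a i * U a i ≤ ∑ a', U a' i * U a' i :=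
      Finset.single_le_sum (fun a' _ => mul_self_nonneg (U a' i)) (Finset.mem_univ a)
    rw [h1, hU1] at h2
    simpa using h2
  have step3 : |(P * M).trace| ≤ q * N := by
    have h2 : P * M = U * (diagonal ind * (star U * M * U)) * star U := by
      rw [hP]
      simp only [Matrix.mul_assoc]
      rw [hU2, Matrix.mul_one]
    rw [h2, trace_conj _ _ hU1, trace_diagonal_mul]
    have h3 : ∀ i, |(star U * M * U) i i| ≤ N := by
      intro i
      have h4 : (star U * M * U) i i = ∑ a, ∑ b, U a i * (M a b * U b i) := by
        rw [Matrix.mul_assoc, Matrix.mul_apply]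
        apply Finset.sum_congr rfl
        intro a _
        rw [Matrix.star_apply, star_trivial, Matrix.mul_apply, Finset.mul_sum]
      rw [h4, hN]
      calc |∑ a, ∑ b, U a i * (M a b * U b i)| ≤ ∑ a, |∑ b, U a i * (M a b * U b i)| :=
            Finset.abs_sum_le_sum_abs _ _
        _ ≤ ∑ a, ∑ b, |U a i * (M a b * U b i)| :=
            Finset.sum_le_sum fun a _ => Finset.abs_sum_le_sum_abs _ _
        _ ≤ ∑ a, ∑ b, |M a b| := by
            apply Finset.sum_le_sum
            intro a _
            apply Finset.sum_le_sum
            intro b _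
            rw [abs_mul, abs_mul]
            calc |U a i| * (|M a b| * |U b i|) ≤ 1 * (|M a b| * 1) := by
                  apply mul_le_mul (hUentry a i) _ (by positivity) zero_le_one
                  exact mul_le_mul_of_nonneg_left (hUentry b i) (abs_nonneg _)
              _ = |M a b| := by ring
    calc |∑ i, ind i * (star U * M * U) i i|
        ≤ ∑ i, |ind i * (star U * M * U) i i| := Finset.abs_sum_le_sum_abs _ _
      _ ≤ ∑ _i : Fin q, N := by
          apply Finset.sum_le_sum
          intro i _
          rw [abs_mul]
          have : |ind i| ≤ 1 := by rw [hind]; dsimp; split <;> simp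
          calc |ind i| * |(star U * M * U) i i| ≤ 1 * N :=
                mul_le_mul this (h3 i) (abs_nonneg _) zero_le_one
            _ = N := one_mul N
      _ = q * N := by rw [Finset.sum_const, Finset.card_univ, Fintype.card_fin, nsmul_eq_mul]
  -- assemble
  have hdecomp : (P * A).trace = (P * B).trace + (P * M).trace := by
    rw [hM, Matrix.mul_sub, Matrix.trace_sub]
    ring
  have := step1 ▸ hdecomp
  rw [this, step2eq]
  have h5 : (P * M).trace ≤ q * N := le_trans (le_abs_self _) step3
  have h6 := step2le
  linarith

lemma sTop_succ {q : ℕ} (A : Matrix (Fin q) (Fin q) ℝ) (i : Fin q) :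
    sTop ((i : ℕ) + 1) A = sTop (i : ℕ) A + lamVec A i := by
  have hfil : Finset.univ.filter (fun j : Fin q => (j : ℕ) < (i : ℕ) + 1)
      = insert i (Finset.univ.filter (fun j : Fin q => (j : ℕ) < (i : ℕ))) := by
    ext j
    simp only [Finset.mem_filter, Finset.mem_univ, true_and, Finset.mem_insert, Fin.ext_iff]
    omega
  rw [sTop, hfil, Finset.sum_insert (by simp), sTop]
  ring

lemma lamVec_diff_le {q : ℕ} {A B : Matrix (Fin q) (Fin q) ℝ}
    (hA : A.IsHermitian) (hB : B.IsHermitian) (i : Fin q) :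
    |lamVec A i - lamVec B i| ≤ 2 * q * ∑ a, ∑ b, |(A - B) a b| := by
  have hNsymm : ∑ a, ∑ b, |(B - A) a b| = ∑ a, ∑ b, |(A - B) a b| := by
    apply Finset.sum_congr rfl; intro a _
    apply Finset.sum_congr rfl; intro b _
    rw [Matrix.sub_apply, Matrix.sub_apply, abs_sub_comm]
  have h1 := sTop_le ((i : ℕ) + 1) i.2 hA hB
  have h2 := sTop_le ((i : ℕ) + 1) i.2 hB hA
  have h3 := sTop_le (i : ℕ) (le_of_lt i.2) hA hB
  have h4 := sTop_le (i : ℕ) (le_of_lt i.2) hB hA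
  rw [hNsymm] at h2 h4
  have e1 := sTop_succ A i
  have e2 := sTop_succ B i
  rw [abs_le]
  constructor <;> nlinarith

lemma continuousOn_lamVec {q : ℕ} :
    ContinuousOn (lamVec (q := q)) {A : Matrix (Fin q) (Fin q) ℝ | A.IsHermitian} := by
  intro A₀ hA₀
  rw [continuousWithinAt_pi]
  intro i
  set s : Set (Matrix (Fin q) (Fin q) ℝ) := {A | A.IsHermitian} with hs
  set Nf : Matrix (Fin q) (Fin q) ℝ → ℝ :=
    fun B => 2 * q * ∑ a, ∑ b, |(B - A₀) a b| with hNf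
  have hNcont : Continuous Nf := by
    apply continuous_const.mul
    apply continuous_finset_sum
    intro a _
    apply continuous_finset_sum
    intro b _
    exact ((continuous_id.sub continuous_const).matrix_elem a b).abs
  have hNzero : Nf A₀ = 0 := by simp [hNf]
  have hNtend : Filter.Tendsto Nf (nhdsWithin A₀ s) (nhds 0) := by
    have := (hNcont.tendsto A₀).mono_left (nhdsWithin_le_nhds (s := s))
    rwa [hNzero] at this
  have hlow : Filter.Tendsto (fun B => lamVec A₀ i - Nf B) (nhdsWithin A₀ s)
      (nhds (lamVec A₀ i)) := by
    have := Filter.Tendsto.sub (tendsto_const_nhds (x := lamVec A₀ i)) hNtend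
    simpa using this
  have hhigh : Filter.Tendsto (fun B => lamVec A₀ i + Nf B) (nhdsWithin A₀ s)
      (nhds (lamVec A₀ i)) := by
    have := Filter.Tendsto.add (tendsto_const_nhds (x := lamVec A₀ i)) hNtend
    simpa using this
  apply tendsto_of_tendsto_of_tendsto_of_le_of_le' hlow hhigh
  · filter_upwards [self_mem_nhdsWithin] with B hB
    have := lamVec_diff_le hA₀ hB i
    have h2 : ∑ a, ∑ b, |(A₀ - B) a b| = ∑ a, ∑ b, |(B - A₀) a b| := by
      apply Finset.sum_congr rfl; intro a _
      apply Finset.sum_congr rfl; intro b _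
      rw [Matrix.sub_apply, Matrix.sub_apply, abs_sub_comm]
    rw [abs_le] at this
    simp only [hNf]
    rw [h2] at this
    linarith [this.1]
  · filter_upwards [self_mem_nhdsWithin] with B hB
    have := lamVec_diff_le hA₀ hB i
    have h2 : ∑ a, ∑ b, |(A₀ - B) a b| = ∑ a, ∑ b, |(B - A₀) a b| := by
      apply Finset.sum_congr rfl; intro a _
      apply Finset.sum_congr rfl; intro b _
      rw [Matrix.sub_apply, Matrix.sub_apply, abs_sub_comm]
    rw [abs_le] at this
    simp only [hNf]
    rw [h2] at this
    linarith [this.2]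

lemma trace_herm {q : ℕ} {A : Matrix (Fin q) (Fin q) ℝ} (hA : A.IsHermitian) :
    A.trace = ∑ i, hA.eigenvalues i := by
  have hU1 : star (hA.eigenvectorUnitary : Matrix (Fin q) (Fin q) ℝ)
      * (hA.eigenvectorUnitary : Matrix (Fin q) (Fin q) ℝ) = 1 :=
    mem_unitaryGroup_iff'.mp hA.eigenvectorUnitary.2
  conv_lhs => rw [spectral_real hA]
  rw [Matrix.trace_mul_comm _ (star (hA.eigenvectorUnitary : Matrix (Fin q) (Fin q) ℝ)),
    ← Matrix.mul_assoc, hU1, Matrix.one_mul, Matrix.trace_diagonal]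

lemma det_herm {q : ℕ} {A : Matrix (Fin q) (Fin q) ℝ} (hA : A.IsHermitian) :
    A.det = ∏ i, hA.eigenvalues i := by
  have := hA.det_eq_prod_eigenvalues
  simpa using this

lemma posDef_conj {q : ℕ} {A N : Matrix (Fin q) (Fin q) ℝ} (hA : A.PosDef)
    (hN : IsUnit N.det) : (Nᴴ * A * N).PosDef := by
  refine PosDef.of_dotProduct_mulVec_pos (isHermitian_conjTranspose_mul_mul N hA.1) fun x hx => ?_
  have hNx : N *ᵥ x ≠ 0 := by
    intro h
    have hinj := (mulVec_injective_iff_isUnit).mpr ((Matrix.isUnit_iff_isUnit_det N).mpr hN)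
    apply hx
    have : N *ᵥ x = N *ᵥ 0 := by simpa using h
    exact hinj this
  have := hA.dotProduct_mulVec_pos hNx
  simpa only [star_mulVec, dotProduct_mulVec, vecMul_vecMul] using this

open scoped MatrixOrder in
lemma l_ge {q : ℕ} {S A : Matrix (Fin q) (Fin q) ℝ} (hS : S.PosDef) (hA : A.PosDef) :
    (q : ℝ) + Real.log S.det ≤ (A⁻¹ * S).trace + Real.log A.det := by
  classical
  have hAinv : A⁻¹.PosDef := hA.inv
  set Q := CFC.sqrt S with hQdef
  have hQ : Q * Q = S := CFC.sqrt_mul_sqrt_self S hS.posSemidef.nonneg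
  have hQH : Q.IsHermitian := (CFC.sqrt_nonneg S).posSemidef.1
  have hdetS : 0 < S.det := hS.det_pos
  have hdetA : 0 < A.det := hA.det_pos
  have hdetQ : Q.det ≠ 0 := by
    intro h
    rw [← hQ, det_mul, h, mul_zero] at hdetS
    exact lt_irrefl _ hdetS
  have hB : (Q * A⁻¹ * Q).PosDef := by
    have := posDef_conj hAinv (isUnit_iff_ne_zero.mpr hdetQ)
    rwa [hQH.eq] at this
  set B := Q * A⁻¹ * Q with hBdef
  have hBH : B.IsHermitian := hB.isHermitian
  set ν := hBH.eigenvalues with hν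
  have hνpos : ∀ i, 0 < ν i := fun i => hB.eigenvalues_pos i
  have htrB : B.trace = ∑ i, ν i := trace_herm hBH
  have hdetB : B.det = ∏ i, ν i := det_herm hBH
  have hlogdetB : Real.log B.det = ∑ i, Real.log (ν i) := by
    rw [hdetB]
    exact Real.log_prod (fun i _ => (hνpos i).ne')
  have hlogle : Real.log B.det ≤ B.trace - q := by
    rw [hlogdetB, htrB]
    have h1 : ∑ i, Real.log (ν i) ≤ ∑ i, (ν i - 1) :=
      Finset.sum_le_sum (fun i _ => Real.log_le_sub_one_of_pos (hνpos i))
    have h2 : ∑ i : Fin q, (ν i - 1) = (∑ i, ν i) - q := by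
      rw [Finset.sum_sub_distrib]
      simp
    linarith
  have htrBS : B.trace = (A⁻¹ * S).trace := by
    rw [hBdef, Matrix.trace_mul_comm (Q * A⁻¹) Q, ← Matrix.mul_assoc, hQ,
      Matrix.trace_mul_comm S A⁻¹]
  have hdetBS : B.det = S.det * (A.det)⁻¹ := by
    rw [hBdef, det_mul, det_mul, Matrix.det_nonsing_inv, Ring.inverse_eq_inv']
    rw [← hQ, det_mul]
    ring
  have hlogBS : Real.log B.det = Real.log S.det - Real.log A.det := by
    rw [hdetBS, Real.log_mul hdetS.ne' (by positivity), Real.log_inv]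
    ring
  rw [hlogBS, htrBS] at hlogle
  linarith

lemma trace_inv_self {q : ℕ} {S : Matrix (Fin q) (Fin q) ℝ} (hS : S.PosDef) :
    (S⁻¹ * S).trace = q := by
  rw [Matrix.nonsing_inv_mul S (isUnit_iff_ne_zero.mpr hS.det_pos.ne'), Matrix.trace_one]
  simp


lemma continuousOn_lfun {q : ℕ} (S : Matrix (Fin q) (Fin q) ℝ) :
    ContinuousOn (fun A : Matrix (Fin q) (Fin q) ℝ => (A⁻¹ * S).trace + Real.log A.det)
      {A : Matrix (Fin q) (Fin q) ℝ | A.det ≠ 0} := by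
  intro A hA
  apply ContinuousAt.continuousWithinAt
  apply ContinuousAt.add
  · have h1 : Continuous fun M : Matrix (Fin q) (Fin q) ℝ => (M * S).trace :=
      (continuous_id.matrix_mul continuous_const).matrix_trace
    have h2 : ContinuousAt Inv.inv A := continuousAt_matrix_inv A (by
      rw [Ring.inverse_eq_inv']
      exact continuousAt_inv₀ hA)
    exact h1.continuousAt.comp h2
  · exact (Real.continuousAt_log hA).comp (continuous_id.matrix_det).continuousAt
open Matrix Set Filter

lemma lamVec_pos {q : ℕ} {A : Matrix (Fin q) (Fin q) ℝ} (hA : A.PosDef) (i : Fin q) :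
    0 < lamVec A i := by
  rw [lamVec_eq hA.isHermitian]
  simp only [eigsDesc, Function.comp_apply]
  exact hA.eigenvalues_pos _

/-- duality between the penalized problem and the constrained problem.
With `κ_L = inf Π`, `κ_U = Π(S)`, and `Σ̂_η` the unique penalized minimizer
(continuous in `η`): (i) for `κ_L < κ ≤ κ_U` there is a unique minimizer `Σ̃_κ` of
`l(Σ; S)` over `{Π(Σ) ≤ κ}`; (ii) `κ ↦ Σ̃_κ` is continuous on `(κ_L, κ_U]`;
(iii) if `Π(Σ̂_η) > κ_L` then `Σ̂_η = Σ̃_{Π(Σ̂_η)}`; (iv) every `Σ̃_κ` equals some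
`Σ̂_η`. -/
theorem stmt_9 (q : ℕ) (π : (Fin q → ℝ) → ℝ)
    (hπconv : ConvexOn ℝ Set.univ π)
    (hπperm : ∀ (σ : Equiv.Perm (Fin q)) (y : Fin q → ℝ), π (y ∘ σ) = π y)
    (Pen : Matrix (Fin q) (Fin q) ℝ → ℝ)
    (hPennn : ∀ A : Matrix (Fin q) (Fin q) ℝ, A.PosDef → 0 ≤ Pen A)
    (hPen : ∀ (A : Matrix (Fin q) (Fin q) ℝ) (hA : A.PosDef),
      Pen A = π fun i => Real.log (eigsDesc A hA.isHermitian i))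
    (S : Matrix (Fin q) (Fin q) ℝ) (hS : S.PosDef)
    (l : Matrix (Fin q) (Fin q) ℝ → ℝ)
    (hl : ∀ A : Matrix (Fin q) (Fin q) ℝ, l A = (A⁻¹ * S).trace + Real.log A.det)
    (κL κU : ℝ)
    (hκL : κL = sInf (Pen '' {A : Matrix (Fin q) (Fin q) ℝ | A.PosDef}))
    (hκU : κU = Pen S)
    (Sighat : ℝ → Matrix (Fin q) (Fin q) ℝ)
    (hmin : ∀ η : ℝ, 0 ≤ η → (Sighat η).PosDef ∧
      ∀ A : Matrix (Fin q) (Fin q) ℝ, A.PosDef →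
        (l (Sighat η) + η * Pen (Sighat η) ≤ l A + η * Pen A) ∧
        (l A + η * Pen A = l (Sighat η) + η * Pen (Sighat η) → A = Sighat η))
    (hcont : ContinuousOn Sighat (Set.Ici 0)) :
    ∃ Sigtil : ℝ → Matrix (Fin q) (Fin q) ℝ,
      (∀ κ ∈ Set.Ioc κL κU, (Sigtil κ).PosDef ∧ Pen (Sigtil κ) ≤ κ ∧
        ∀ A : Matrix (Fin q) (Fin q) ℝ, A.PosDef → Pen A ≤ κ →
          l (Sigtil κ) ≤ l A ∧ (l A = l (Sigtil κ) → A = Sigtil κ)) ∧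
      ContinuousOn Sigtil (Set.Ioc κL κU) ∧
      (∀ η : ℝ, 0 ≤ η → κL < Pen (Sighat η) → Sighat η = Sigtil (Pen (Sighat η))) ∧
      (∀ κ ∈ Set.Ioc κL κU, ∃ η : ℝ, 0 ≤ η ∧ Sigtil κ = Sighat η) := by
  classical
  have hTpd : ∀ η : ℝ, 0 ≤ η → (Sighat η).PosDef := fun η h => (hmin η h).1
  have hKey : ∀ η : ℝ, 0 ≤ η → ∀ A, A.PosDef →
      l (Sighat η) + η * Pen (Sighat η) ≤ l A + η * Pen A :=
    fun η h A hA => ((hmin η h).2 A hA).1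
  have hUniq : ∀ η : ℝ, 0 ≤ η → ∀ A, A.PosDef →
      l A + η * Pen A = l (Sighat η) + η * Pen (Sighat η) → A = Sighat η :=
    fun η h A hA => ((hmin η h).2 A hA).2
  -- antitone
  have hganti : ∀ η₁ η₂ : ℝ, 0 ≤ η₁ → η₁ ≤ η₂ → Pen (Sighat η₂) ≤ Pen (Sighat η₁) := by
    intro η₁ η₂ h1 h12
    rcases eq_or_lt_of_le h12 with rfl | hlt
    · exact le_refl _
    · have ha := hKey η₁ h1 (Sighat η₂) (hTpd η₂ (h1.trans h12))
      have hb := hKey η₂ (h1.trans h12) (Sighat η₁) (hTpd η₁ h1)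
      nlinarith
  -- constrained minimality at level Pen (Sighat η)
  have hconstr : ∀ η : ℝ, 0 ≤ η → ∀ A, A.PosDef → Pen A ≤ Pen (Sighat η) →
      l (Sighat η) ≤ l A ∧ (l A = l (Sighat η) → A = Sighat η) := by
    intro η hη A hA hPA
    have h1 := hKey η hη A hA
    constructor
    · nlinarith
    · intro hla
      apply hUniq η hη A hA
      have h2 : l A + η * Pen A ≤ l (Sighat η) + η * Pen (Sighat η) := by nlinarith
      exact le_antisymm h2 h1
  -- fibers of Pen ∘ Sighat
  have hfiber : ∀ η₁ η₂ : ℝ, 0 ≤ η₁ → 0 ≤ η₂ → Pen (Sighat η₁) = Pen (Sighat η₂) →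
      Sighat η₁ = Sighat η₂ := by
    intro η₁ η₂ h1 h2 hgg
    have ha := hconstr η₂ h2 (Sighat η₁) (hTpd _ h1) (le_of_eq hgg)
    have hb := hconstr η₁ h1 (Sighat η₂) (hTpd _ h2) (le_of_eq hgg.symm)
    exact ha.2 (le_antisymm hb.1 ha.1)
  -- S is the global minimizer of l
  have hlS_min : ∀ A, A.PosDef → l S ≤ l A := by
    intro A hA
    rw [hl, hl, trace_inv_self hS]
    exact l_ge hS hA
  have hT0 : Sighat 0 = S := by
    refine (hUniq 0 le_rfl S hS ?_).symm
    have h1 := hKey 0 le_rfl S hS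
    have h2 := hlS_min (Sighat 0) (hTpd 0 le_rfl)
    simp only [zero_mul, add_zero] at h1 ⊢
    linarith
  have hg0 : Pen (Sighat 0) = κU := by rw [hT0, hκU]
  -- bounds for Pen ∘ Sighat
  have hbdd : BddBelow (Pen '' {A : Matrix (Fin q) (Fin q) ℝ | A.PosDef}) :=
    ⟨0, by rintro x ⟨A, hA, rfl⟩; exact hPennn A hA⟩
  have hne : (Pen '' {A : Matrix (Fin q) (Fin q) ℝ | A.PosDef}).Nonempty :=
    ⟨Pen S, ⟨S, hS, rfl⟩⟩
  have hgU : ∀ η : ℝ, 0 ≤ η → Pen (Sighat η) ≤ κU := by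
    intro η hη
    rw [← hg0]
    exact hganti 0 η le_rfl hη
  -- far field: Pen (Sighat η) eventually drops below any κ > κL
  have hfar : ∀ κ : ℝ, κL < κ → ∃ B : ℝ, 0 ≤ B ∧ Pen (Sighat B) < κ := by
    intro κ hκ
    rw [hκL] at hκ
    obtain ⟨x, hxmem, hxκ⟩ := (csInf_lt_iff hbdd hne).mp hκ
    obtain ⟨A, hA, rfl⟩ := hxmem
    have hglob : l (Sighat 0) ≤ l A := by
      have := hKey 0 le_rfl A hA
      simpa using this
    set Mv : ℝ := l A - l (Sighat 0) with hMv
    have hM0 : 0 ≤ Mv := by simp [hMv]; linarith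
    have hδ : 0 < κ - Pen A := sub_pos.mpr hxκ
    set B : ℝ := Mv / (κ - Pen A) + 1 with hB
    have hB1 : 1 ≤ B := by
      have : 0 ≤ Mv / (κ - Pen A) := div_nonneg hM0 (le_of_lt hδ)
      simp [hB]; linarith
    have hBpos : 0 < B := by linarith
    refine ⟨B, by linarith, ?_⟩
    have h1 := hKey B (by linarith) A hA
    have h2 : l (Sighat 0) ≤ l (Sighat B) := by
      have := hKey 0 le_rfl (Sighat B) (hTpd B (by linarith))
      simpa using this
    have hmul : (κ - Pen A) * B = Mv + (κ - Pen A) := by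
      rw [hB]
      field_simp
    nlinarith
  -- continuity of Pen ∘ Sighat on [0, ∞)
  have hπc : ∀ y : Fin q → ℝ, ContinuousAt π y :=
    fun y => (hπconv.continuousOn isOpen_univ).continuousAt Filter.univ_mem
  have hgcont : ContinuousOn (fun η => Pen (Sighat η)) (Set.Ici 0) := by
    have heq : ∀ η ∈ Set.Ici (0:ℝ),
        Pen (Sighat η) = π (fun i => Real.log (lamVec (Sighat η) i)) := by
      intro η hη
      rw [hPen _ (hTpd η hη)]
      congr 1
      funext i
      rw [lamVec_eq (hTpd η hη).isHermitian]
    apply ContinuousOn.congr _ heq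
    have h1 : ContinuousOn (fun η => lamVec (Sighat η)) (Set.Ici 0) :=
      continuousOn_lamVec.comp hcont (fun η hη => (hTpd η hη).isHermitian)
    intro η hη
    apply ContinuousAt.comp_continuousWithinAt (hπc _)
    rw [continuousWithinAt_pi]
    intro i
    have hco : ContinuousWithinAt (fun η => lamVec (Sighat η) i) (Set.Ici 0) η :=
      (continuous_apply i).continuousAt.comp_continuousWithinAt (h1 η hη)
    exact hco.log (lamVec_pos (hTpd η hη) i).ne'
  -- continuity of l ∘ Sighat not needed separately
  -- level sets
  set E : ℝ → Set ℝ := fun κ => {η : ℝ | 0 ≤ η ∧ Pen (Sighat η) = κ} with hE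
  have hEclosed : ∀ κ, IsClosed (E κ) := by
    intro κ
    have h : E κ = Set.Ici 0 ∩ (fun η => Pen (Sighat η)) ⁻¹' {κ} := by
      ext η; simp [hE, Set.mem_Ici]
    rw [h]
    exact hgcont.preimage_isClosed_of_isClosed isClosed_Ici isClosed_singleton
  have hEne : ∀ κ ∈ Set.Ioc κL κU, (E κ).Nonempty := by
    intro κ hκ
    obtain ⟨B, hB0, hBg⟩ := hfar κ hκ.1
    have hIVT := intermediate_value_Icc' hB0 (hgcont.mono (Set.Icc_subset_Ici_self))
    have hmem : κ ∈ Set.Icc (Pen (Sighat B)) (Pen (Sighat 0)) :=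
      ⟨le_of_lt hBg, hg0 ▸ hκ.2⟩
    obtain ⟨η, hη, hgη⟩ := hIVT hmem
    exact ⟨η, hη.1, hgη⟩
  have hEbddb : ∀ κ, BddBelow (E κ) := fun κ => ⟨0, fun η hη => hη.1⟩
  have hEbdda : ∀ κ, κL < κ → BddAbove (E κ) := by
    intro κ hκ
    obtain ⟨B, hB0, hBg⟩ := hfar κ hκ
    refine ⟨B, fun η hη => ?_⟩
    by_contra hcon
    push_neg at hcon
    have h1 := hganti B η hB0 (le_of_lt hcon)
    rw [hη.2] at h1
    linarith
  set ηst : ℝ → ℝ := fun κ => sInf (E κ) with hηst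
  have hηstmem : ∀ κ, κ ∈ Set.Ioc κL κU → ηst κ ∈ E κ := fun κ hκ =>
    (hEclosed κ).csInf_mem (hEne κ hκ) (hEbddb κ)
  refine ⟨fun κ => Sighat (ηst κ), ?_, ?_, ?_, ?_⟩
  · -- (i)
    intro κ hκ
    obtain ⟨hη0, hgη⟩ := hηstmem κ hκ
    refine ⟨hTpd _ hη0, le_of_eq hgη, ?_⟩
    intro A hA hPA
    exact hconstr _ hη0 A hA (by rw [hgη]; exact hPA)
  · -- (ii) continuity
    intro κ₀ hκ₀
    set a : ℝ := sInf (E κ₀) with ha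
    set b : ℝ := sSup (E κ₀) with hb
    have hamem : a ∈ E κ₀ := hηstmem κ₀ hκ₀
    have hbmem : b ∈ E κ₀ := (hEclosed κ₀).csSup_mem (hEne κ₀ hκ₀) (hEbdda κ₀ hκ₀.1)
    have hT_ab : Sighat b = Sighat a :=
      hfiber b a hbmem.1 hamem.1 (by rw [hbmem.2, hamem.2])
    have hgb_lt : ∀ η, b < η → Pen (Sighat η) < κ₀ := by
      intro η hbη
      have hη0 : 0 ≤ η := le_trans hbmem.1 (le_of_lt hbη)
      have h1 : Pen (Sighat η) ≤ κ₀ := by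
        rw [← hbmem.2]; exact hganti b η hbmem.1 (le_of_lt hbη)
      rcases lt_or_eq_of_le h1 with h | h
      · exact h
      · exfalso
        have hmem : η ∈ E κ₀ := ⟨hη0, h⟩
        have := le_csSup (hEbdda κ₀ hκ₀.1) hmem
        rw [← hb] at this
        linarith
    have hga_gt : ∀ η, 0 ≤ η → η < a → κ₀ < Pen (Sighat η) := by
      intro η hη0 hηa
      have h1 : κ₀ ≤ Pen (Sighat η) := by
        rw [← hamem.2]; exact hganti η a hη0 (le_of_lt hηa)
      rcases lt_or_eq_of_le h1 with h | h
      · exact h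
      · exfalso
        have hmem : η ∈ E κ₀ := ⟨hη0, h.symm⟩
        have := csInf_le (hEbddb κ₀) hmem
        rw [← ha] at this
        linarith
    have hsplit : Set.Ioc κL κU = (Set.Ioc κL κU ∩ Set.Iio κ₀) ∪ (Set.Ioc κL κU ∩ Set.Ici κ₀) := by
      rw [← Set.inter_union_distrib_left, Set.Iio_union_Ici, Set.inter_univ]
    have hreda : (fun κ => Sighat (ηst κ)) κ₀ = Sighat a := by
      show Sighat (ηst κ₀) = Sighat a
      simp only [hηst]
      rfl
    have hredb : (fun κ => Sighat (ηst κ)) κ₀ = Sighat b := by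
      rw [hreda, ← hT_ab]
    unfold ContinuousWithinAt
    rw [hsplit, nhdsWithin_union, Filter.tendsto_sup]
    constructor
    · -- left branch, target b
      have htb : Tendsto ηst (nhdsWithin κ₀ (Set.Ioc κL κU ∩ Set.Iio κ₀)) (nhds b) := by
        rw [tendsto_order]
        constructor
        · intro x hx
          filter_upwards [self_mem_nhdsWithin] with κ hκmem
          obtain ⟨hst0, hstg⟩ := hηstmem κ hκmem.1
          have hbst : b < ηst κ := by
            by_contra hc
            push_neg at hc
            have h1 := hganti (ηst κ) b hst0 hc
            rw [hstg, hbmem.2] at h1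
            exact absurd hκmem.2 (not_lt.mpr h1)
          linarith
        · intro y hy
          set η' : ℝ := (b + y)/2 with hη'
          have hη'b : b < η' := by rw [hη']; linarith
          have hη'y : η' < y := by rw [hη']; linarith
          have hgη' : Pen (Sighat η') < κ₀ := hgb_lt η' hη'b
          filter_upwards [nhdsWithin_le_nhds (Ioi_mem_nhds hgη'), self_mem_nhdsWithin]
            with κ hκgt hκmem
          obtain ⟨hst0, hstg⟩ := hηstmem κ hκmem.1
          have : ηst κ < η' := by
            by_contra hc
            push_neg at hc
            have h1 := hganti η' (ηst κ) (le_trans hbmem.1 (le_of_lt hη'b)) hc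
            rw [hstg] at h1
            exact absurd hκgt (not_lt.mpr h1)
          linarith
      have hcomp : Tendsto Sighat (nhdsWithin b (Set.Ici 0)) (nhds (Sighat b)) :=
        hcont b hbmem.1
      have hfin : Tendsto (fun κ => Sighat (ηst κ))
          (nhdsWithin κ₀ (Set.Ioc κL κU ∩ Set.Iio κ₀)) (nhds (Sighat b)) := by
        apply hcomp.comp
        rw [tendsto_nhdsWithin_iff]
        refine ⟨htb, ?_⟩
        filter_upwards [self_mem_nhdsWithin] with κ hκmem
        exact (hηstmem κ hκmem.1).1
      rw [hredb]
      exact hfin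
    · -- right branch, target a
      have hta : Tendsto ηst (nhdsWithin κ₀ (Set.Ioc κL κU ∩ Set.Ici κ₀)) (nhds a) := by
        rw [tendsto_order]
        constructor
        · intro x hx
          by_cases hx0 : x < 0
          · filter_upwards [self_mem_nhdsWithin] with κ hκmem
            exact lt_of_lt_of_le hx0 (hηstmem κ hκmem.1).1
          · push_neg at hx0
            set η' : ℝ := (x + a)/2 with hη'
            have hη'0 : 0 ≤ η' := by rw [hη']; linarith
            have hη'a : η' < a := by rw [hη']; linarith
            have hη'x : x < η' := by rw [hη']; linarith
            have hgη' : κ₀ < Pen (Sighat η') := hga_gt η' hη'0 hη'a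
            filter_upwards [nhdsWithin_le_nhds (Iio_mem_nhds hgη'), self_mem_nhdsWithin]
              with κ hκlt hκmem
            obtain ⟨hst0, hstg⟩ := hηstmem κ hκmem.1
            have : η' < ηst κ := by
              by_contra hc
              push_neg at hc
              have h1 := hganti (ηst κ) η' hst0 hc
              rw [hstg] at h1
              exact absurd hκlt (not_lt.mpr h1)
            linarith
        · intro y hy
          filter_upwards [self_mem_nhdsWithin] with κ hκmem
          obtain ⟨hst0, hstg⟩ := hηstmem κ hκmem.1
          rcases eq_or_lt_of_le (Set.mem_Ici.mp hκmem.2) with heq | hlt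
          · have : ηst κ = a := by rw [← heq]
            linarith
          · have hsta : ηst κ < a := by
              by_contra hc
              push_neg at hc
              have h1 := hganti a (ηst κ) hamem.1 hc
              rw [hstg, hamem.2] at h1
              exact absurd hlt (not_lt.mpr h1)
            linarith
      have hcomp : Tendsto Sighat (nhdsWithin a (Set.Ici 0)) (nhds (Sighat a)) :=
        hcont a hamem.1
      have hfin : Tendsto (fun κ => Sighat (ηst κ))
          (nhdsWithin κ₀ (Set.Ioc κL κU ∩ Set.Ici κ₀)) (nhds (Sighat a)) := by
        apply hcomp.comp
        rw [tendsto_nhdsWithin_iff]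
        refine ⟨hta, ?_⟩
        filter_upwards [self_mem_nhdsWithin] with κ hκmem
        exact (hηstmem κ hκmem.1).1
      rw [hreda]
      exact hfin
  · -- (iii)
    intro η hη hgt
    have hmemIoc : Pen (Sighat η) ∈ Set.Ioc κL κU := ⟨hgt, hgU η hη⟩
    obtain ⟨h0, hgeq⟩ := hηstmem _ hmemIoc
    exact hfiber η (ηst (Pen (Sighat η))) hη h0 hgeq.symm
  · -- (iv)
    intro κ hκ
    exact ⟨ηst κ, (hηstmem κ hκ).1, rfl⟩
end

section
/- Let 𝒟 be a closed subset of ℝ^p, let f, g : 𝒟 → ℝ be continuous with g(x) > 0 for all x ∈ 𝒟, and let 0 ≤ η₀ < η₁. For η ∈ [η₀, η₁] define h(x; η) = f(x) + η·g(x), and suppose that for every η ∈ [η₀, η₁] the function h(·; η) has a unique global minimizer x(η) ∈ 𝒟. If the sublevel set {x ∈ 𝒟 : h(x; η₀) ≤ c} is compact for every c ≥ inf{h(x; η₀) : x ∈ 𝒟}, then the map η ↦ x(η) is continuous on [η₀, η₁). -/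
/-- Lemma cont: continuity of the argmin.  Let `𝒟 ⊆ ℝ^p` be closed,
`f, g` continuous on `𝒟` with `g > 0`, `0 ≤ η₀ < η₁`, and suppose
`h(x; η) = f(x) + η g(x)` has a unique global minimizer `x(η) ∈ 𝒟` for each
`η ∈ [η₀, η₁]`.  If every sublevel set `{x ∈ 𝒟 : h(x; η₀) ≤ c}` with
`c ≥ inf_𝒟 h(·; η₀)` is compact, then `η ↦ x(η)` is continuous on `[η₀, η₁)`. -/
theorem stmt_14 (p : ℕ) (D : Set (Fin p → ℝ)) (hD : IsClosed D)
    (f g : (Fin p → ℝ) → ℝ) (hf : ContinuousOn f D) (hg : ContinuousOn g D)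
    (hgpos : ∀ x ∈ D, 0 < g x)
    (η₀ η₁ : ℝ) (hη₀ : 0 ≤ η₀) (hη : η₀ < η₁)
    (xmin : ℝ → (Fin p → ℝ))
    (hxmin : ∀ η ∈ Set.Icc η₀ η₁, xmin η ∈ D ∧
      ∀ x ∈ D, (f (xmin η) + η * g (xmin η) ≤ f x + η * g x) ∧
        (f x + η * g x = f (xmin η) + η * g (xmin η) → x = xmin η))
    (hcompact : ∀ c : ℝ, sInf ((fun x => f x + η₀ * g x) '' D) ≤ c →
      IsCompact {x ∈ D | f x + η₀ * g x ≤ c}) :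
    ContinuousOn xmin (Set.Ico η₀ η₁) := by
  have hIccne : η₀ ∈ Set.Icc η₀ η₁ := ⟨le_refl _, le_of_lt hη⟩
  obtain ⟨hx₀D, hx₀min⟩ := hxmin η₀ hIccne
  set x₀ := xmin η₀ with hx₀
  set c : ℝ := f x₀ + η₁ * g x₀ with hc
  -- boundedness below of the image
  have hbdd : BddBelow ((fun x => f x + η₀ * g x) '' D) := by
    by_contra hb
    have hs0 : sInf ((fun x => f x + η₀ * g x) '' D) = 0 := Real.sInf_of_not_bddBelow hb
    have hK0 : IsCompact {x ∈ D | f x + η₀ * g x ≤ 0} := hcompact 0 (le_of_eq hs0)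
    have hsub : {x ∈ D | f x + η₀ * g x ≤ 0} ⊆ D := fun x hx => hx.1
    have hcont : ContinuousOn (fun x => f x + η₀ * g x) D :=
      hf.add (continuousOn_const.mul hg)
    have hbb : BddBelow ((fun x => f x + η₀ * g x) '' {x ∈ D | f x + η₀ * g x ≤ 0}) :=
      hK0.bddBelow_image (hcont.mono hsub)
    obtain ⟨B, hB⟩ := hbb
    apply hb
    refine ⟨min B 0, ?_⟩
    rintro y ⟨x, hxD, rfl⟩
    by_cases h0 : f x + η₀ * g x ≤ 0
    · exact le_trans (min_le_left _ _) (hB ⟨x, ⟨hxD, h0⟩, rfl⟩)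
    · exact le_trans (min_le_right _ _) (le_of_not_ge h0)
  have hcle : sInf ((fun x => f x + η₀ * g x) '' D) ≤ c := by
    have h1 : sInf ((fun x => f x + η₀ * g x) '' D) ≤ f x₀ + η₀ * g x₀ :=
      csInf_le hbdd ⟨x₀, hx₀D, rfl⟩
    nlinarith [hgpos x₀ hx₀D]
  have hK : IsCompact {x ∈ D | f x + η₀ * g x ≤ c} := hcompact c hcle
  set K := {x ∈ D | f x + η₀ * g x ≤ c} with hKdef
  -- all minimizers belong to K
  have hmemK : ∀ ν ∈ Set.Icc η₀ η₁, xmin ν ∈ K := by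
    intro ν hν
    obtain ⟨hνD, hνmin⟩ := hxmin ν hν
    refine ⟨hνD, ?_⟩
    have h1 : f (xmin ν) + ν * g (xmin ν) ≤ f x₀ + ν * g x₀ := (hνmin x₀ hx₀D).1
    nlinarith [hgpos (xmin ν) hνD, hgpos x₀ hx₀D, hν.1, hν.2]
  -- key sequential lemma
  have key : ∀ (v : ℕ → ℝ), (∀ n, v n ∈ Set.Icc η₀ η₁) → ∀ μ ∈ Set.Icc η₀ η₁,
      Filter.Tendsto v Filter.atTop (nhds μ) →
      Filter.Tendsto (fun n => xmin (v n)) Filter.atTop (nhds (xmin μ)) := by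
    intro v hv μ hμ hvμ
    obtain ⟨hμD, hμmin⟩ := hxmin μ hμ
    apply Filter.tendsto_of_subseq_tendsto
    intro ns hns
    have hvn : ∀ n, xmin (v (ns n)) ∈ K := fun n => hmemK _ (hv (ns n))
    obtain ⟨y, hyK, φ, hφ, hyt⟩ := hK.tendsto_subseq hvn
    refine ⟨φ, ?_⟩
    -- show y = xmin μ
    have hyD : y ∈ D := hyK.1
    have hseqD : ∀ n, xmin (v (ns (φ n))) ∈ D := fun n => (hvn (φ n)).1
    have htD : Filter.Tendsto (fun n => xmin (v (ns (φ n)))) Filter.atTop (nhdsWithin y D) :=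
      tendsto_nhdsWithin_of_tendsto_nhds_of_eventually_within _ hyt
        (Filter.Eventually.of_forall hseqD)
    have hμn : Filter.Tendsto (fun n => v (ns (φ n))) Filter.atTop (nhds μ) :=
      (hvμ.comp hns).comp hφ.tendsto_atTop
    have hfy : Filter.Tendsto (fun n => f (xmin (v (ns (φ n))))) Filter.atTop (nhds (f y)) :=
      (hf y hyD).tendsto.comp htD
    have hgy : Filter.Tendsto (fun n => g (xmin (v (ns (φ n))))) Filter.atTop (nhds (g y)) :=
      (hg y hyD).tendsto.comp htD
    have hylim : ∀ x ∈ D, f y + μ * g y ≤ f x + μ * g x := by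
      intro x hxD
      have hle : ∀ n, f (xmin (v (ns (φ n)))) + (v (ns (φ n))) * g (xmin (v (ns (φ n))))
          ≤ f x + (v (ns (φ n))) * g x := by
        intro n
        exact ((hxmin _ (hv (ns (φ n)))).2 x hxD).1
      have hL : Filter.Tendsto
          (fun n => f (xmin (v (ns (φ n)))) + (v (ns (φ n))) * g (xmin (v (ns (φ n)))))
          Filter.atTop (nhds (f y + μ * g y)) := hfy.add (hμn.mul hgy)
      have hR : Filter.Tendsto (fun n => f x + (v (ns (φ n))) * g x)
          Filter.atTop (nhds (f x + μ * g x)) :=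
        tendsto_const_nhds.add (hμn.mul tendsto_const_nhds)
      exact le_of_tendsto_of_tendsto' hL hR hle
    have hyeq : y = xmin μ := by
      have h1 := (hμmin y hyD).1
      have h2 := hylim (xmin μ) hμD
      exact (hμmin y hyD).2 (le_antisymm h2 h1)
    rw [hyeq] at hyt
    exact hyt
  -- conclude continuity
  intro η hη'
  have hηIcc : η ∈ Set.Icc η₀ η₁ := ⟨hη'.1, le_of_lt hη'.2⟩
  rw [ContinuousWithinAt]
  apply Filter.tendsto_iff_seq_tendsto.mpr
  intro u hu
  have humem : ∀ᶠ n in Filter.atTop, u n ∈ Set.Ico η₀ η₁ :=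
    hu.eventually eventually_mem_nhdsWithin
  have hunhds : Filter.Tendsto u Filter.atTop (nhds η) := hu.mono_right nhdsWithin_le_nhds
  set u' : ℕ → ℝ := fun n => if u n ∈ Set.Icc η₀ η₁ then u n else η with hu'
  have hu'mem : ∀ n, u' n ∈ Set.Icc η₀ η₁ := by
    intro n
    simp only [hu']
    split
    · assumption
    · exact hηIcc
  have hequ : ∀ᶠ n in Filter.atTop, u' n = u n := by
    filter_upwards [humem] with n hn
    simp only [hu', if_pos (Set.Ico_subset_Icc_self hn)]
  have hu't : Filter.Tendsto u' Filter.atTop (nhds η) :=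
    hunhds.congr' (hequ.mono fun n h => h.symm)
  have := key u' hu'mem η hηIcc hu't
  exact this.congr' (hequ.mono fun n h => by simp [Function.comp, h])
end

section
/- Let Π be a nonnegative function on the q×q real symmetric positive definite matrices such that Π(Σ) = π(log λ₁(Σ), …, log λ_q(Σ)) for a convex, permutation-invariant π : ℝ^q → ℝ, and suppose Π(Σ*) = 0 for some positive definite Σ*. Let (S_n) be a sequence of positive definite matrices converging to a positive definite matrix Σ_o, and for each n and each η ≥ 0 let Σ̂_{n,η} denote the unique minimizer over positive definite Σ of L(Σ; S_n, η) = tr(Σ⁻¹S_n) + log det(Σ) + η·Π(Σ). Then there exist constants 0 < c ≤ C < ∞ such that for all n and all η ≥ 0, every eigenvalue of Σ̂_{n,η} lies in [c, C]; in other words, the set {Σ̂_{n,η} : n ∈ ℕ, η ≥ 0} is contained in a compact subset of the cone of positive definite matrices. -/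
open Matrix Filter

section Helpers


lemma scalar_bound {m K : ℝ} (hm : 0 < m) :
    ∃ c : ℝ, 0 < c ∧ c ≤ Real.exp K ∧ ∀ t : ℝ, 0 < t → m * t⁻¹ + Real.log t ≤ K →
      c ≤ t ∧ t ≤ Real.exp K := by
  set M1 : ℝ := max ((2*m*K - 4*m + 4)/m^2) 1 with hM1
  have hM1pos : 0 < M1 := lt_of_lt_of_le one_pos (le_max_right _ _)
  refine ⟨min M1⁻¹ (Real.exp K),
    lt_min (inv_pos.mpr hM1pos) (Real.exp_pos K), min_le_right _ _, fun t ht hKt => ?_⟩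
  have hxx : 0 < m * t⁻¹ := mul_pos hm (inv_pos.mpr ht)
  have hup : t ≤ Real.exp K := by
    have : Real.log t ≤ K := by linarith
    calc t = Real.exp (Real.log t) := (Real.exp_log ht).symm
    _ ≤ Real.exp K := Real.exp_le_exp.mpr this
  refine ⟨?_, hup⟩
  set u : ℝ := (Real.sqrt t)⁻¹ with hu
  have hsq : 0 < Real.sqrt t := Real.sqrt_pos.mpr ht
  have hupos : 0 < u := inv_pos.mpr hsq
  have hu2 : u^2 = t⁻¹ := by
    rw [hu, sq, ← mul_inv, Real.mul_self_sqrt ht.le]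
  have hlogu : Real.log u = -(Real.log t / 2) := by
    rw [hu, Real.log_inv, Real.log_sqrt ht.le]
  have h1 : Real.log u ≤ u - 1 := Real.log_le_sub_one_of_pos hupos
  have hkey : m * u^2 + 2 - 2*u ≤ K := by
    rw [hu2]; rw [hlogu] at h1; linarith
  have h2 : u^2 ≤ M1 := by
    have : u^2 ≤ (2*m*K - 4*m + 4)/m^2 := by
      rw [le_div_iff₀ (by positivity)]
      nlinarith [sq_nonneg (m*u - 2)]
    exact this.trans (le_max_left _ _)
  have h3 : t⁻¹ ≤ M1 := hu2 ▸ h2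
  have h4 : M1⁻¹ ≤ t := by
    calc M1⁻¹ ≤ (t⁻¹)⁻¹ := by
          apply inv_anti₀ (inv_pos.mpr ht) h3
    _ = t := inv_inv t
  exact (min_le_left _ _).trans h4

lemma exists_forall_le_of_tendsto {f : ℕ → ℝ} {a : ℝ}
    (h : Tendsto f atTop (nhds a)) : ∃ B, ∀ n, f n ≤ B := by
  have hev : ∀ᶠ n in atTop, f n ≤ a + 1 :=
    (h.eventually (eventually_le_nhds (by linarith)))
  obtain ⟨N, hN⟩ := eventually_atTop.mp hev
  refine ⟨max (a+1) (((Finset.range (N+1)).sup' (by simp) f)), fun n => ?_⟩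
  rcases le_or_gt N n with hn | hn
  · exact (hN n hn).trans (le_max_left _ _)
  · exact le_trans (Finset.le_sup' f (by simp [Finset.mem_range]; omega)) (le_max_right _ _)

variable {q : ℕ}

-- spectral decomposition over ℝ, packaged
lemma real_spectral {A : Matrix (Fin q) (Fin q) ℝ} (hA : A.IsHermitian) :
    A = (hA.eigenvectorUnitary : Matrix (Fin q) (Fin q) ℝ) * diagonal hA.eigenvalues *
      (star (hA.eigenvectorUnitary : Matrix (Fin q) (Fin q) ℝ)) := by
  have := hA.spectral_theorem
  rwa [RCLike.ofReal_real_eq_id, Function.id_comp] at this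

lemma quad_lb {A : Matrix (Fin q) (Fin q) ℝ} (hA : A.PosDef) :
    ∃ m : ℝ, 0 < m ∧ ∀ x : Fin q → ℝ, m * (x ⬝ᵥ x) ≤ x ⬝ᵥ (A *ᵥ x) := by
  rcases Nat.eq_zero_or_pos q with hq | hq
  · refine ⟨1, one_pos, fun x => ?_⟩
    subst hq
    simp [dotProduct]
  have hne : (Finset.univ : Finset (Fin q)).Nonempty := by
    rw [Finset.univ_nonempty_iff]; exact Fin.pos_iff_nonempty.mp hq
  set hH := hA.isHermitian
  set m : ℝ := Finset.univ.inf' hne hH.eigenvalues with hm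
  have hmpos : 0 < m := by
    rw [hm, Finset.lt_inf'_iff]
    exact fun i _ => hA.eigenvalues_pos i
  refine ⟨m, hmpos, fun x => ?_⟩
  set U : Matrix (Fin q) (Fin q) ℝ := (hH.eigenvectorUnitary : Matrix (Fin q) (Fin q) ℝ) with hU
  have hUU : U * star U = 1 := (Matrix.mem_unitaryGroup_iff).mp hH.eigenvectorUnitary.2
  have hdiag : (A - m • 1).PosSemidef := by
    have h1 : (m • (1 : Matrix (Fin q) (Fin q) ℝ)) = U * (m • 1) * star U := by
      rw [mul_smul_comm, mul_one, smul_mul_assoc, hUU]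
    have h2 : A - m • 1 = U * (diagonal (fun i => hH.eigenvalues i - m)) * star U := by
      have : diagonal (fun i => hH.eigenvalues i - m) =
          diagonal hH.eigenvalues - m • (1 : Matrix (Fin q) (Fin q) ℝ) := by
        rw [smul_one_eq_diagonal, diagonal_sub]
      rw [this, mul_sub, sub_mul, ← real_spectral hH, ← h1]
    rw [h2]
    refine PosSemidef.mul_mul_conjTranspose_same (PosSemidef.diagonal ?_) U
    intro i
    simp only [Pi.zero_apply, sub_nonneg]
    exact Finset.inf'_le _ (Finset.mem_univ i)
  have := hdiag.dotProduct_mulVec_nonneg x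
  simp only [sub_mulVec, dotProduct_sub, smul_mulVec, one_mulVec, dotProduct_smul,
    star_trivial, smul_eq_mul] at this
  linarith

lemma trace_inv_mul (A Sm : Matrix (Fin q) (Fin q) ℝ) (hA : A.PosDef) :
    ∃ w : Fin q → (Fin q → ℝ), (∀ i, w i ⬝ᵥ w i = 1) ∧
      (A⁻¹ * Sm).trace =
        ∑ i, (hA.isHermitian.eigenvalues i)⁻¹ * (w i ⬝ᵥ (Sm *ᵥ w i)) := by
  set hH := hA.isHermitian
  set U : Matrix (Fin q) (Fin q) ℝ := (hH.eigenvectorUnitary : Matrix (Fin q) (Fin q) ℝ) with hU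
  have hUU : U * star U = 1 := (Matrix.mem_unitaryGroup_iff).mp hH.eigenvectorUnitary.2
  have hUU' : star U * U = 1 := (Matrix.mem_unitaryGroup_iff').mp hH.eigenvectorUnitary.2
  have hne : ∀ i, hH.eigenvalues i ≠ 0 := fun i => (hA.eigenvalues_pos i).ne'
  have hAinv : A⁻¹ = U * diagonal (fun i => (hH.eigenvalues i)⁻¹) * star U := by
    apply inv_eq_right_inv
    calc A * (U * diagonal (fun i => (hH.eigenvalues i)⁻¹) * star U)
        = (U * diagonal hH.eigenvalues * star U) *
            (U * diagonal (fun i => (hH.eigenvalues i)⁻¹) * star U) := by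
          rw [← real_spectral hH]
      _ = U * (diagonal hH.eigenvalues * ((star U * U) *
            diagonal (fun i => (hH.eigenvalues i)⁻¹))) * star U := by
          noncomm_ring
      _ = U * (diagonal hH.eigenvalues * diagonal (fun i => (hH.eigenvalues i)⁻¹)) * star U := by
          rw [hUU', one_mul]
      _ = 1 := by
          rw [diagonal_mul_diagonal]
          simp only [ne_eq, mul_inv_cancel₀ (hne _)]
          rw [diagonal_one, mul_one, hUU]
  refine ⟨fun i => fun j => U j i, fun i => ?_, ?_⟩
  · have := congrFun (congrFun hUU' i) i
    simp only [Matrix.mul_apply, star_apply, star_trivial, Matrix.one_apply_eq] at this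
    simpa [dotProduct] using this
  · rw [hAinv]
    have : U * diagonal (fun i => (hH.eigenvalues i)⁻¹) * star U * Sm =
        U * (diagonal (fun i => (hH.eigenvalues i)⁻¹) * (star U * Sm)) := by noncomm_ring
    rw [this, trace_mul_comm]
    simp only [Matrix.trace, Matrix.diag, Matrix.mul_apply, diagonal_mul, star_apply,
      star_trivial, dotProduct, Matrix.mulVec, Finset.mul_sum]
    apply Finset.sum_congr rfl
    intro x _
    rw [Finset.sum_comm]
    apply Finset.sum_congr rfl
    intro j _
    rw [Finset.sum_comm, Finset.sum_mul]
    simp only [diagonal_apply, ite_mul, zero_mul, Finset.sum_ite_eq, Finset.mem_univ, if_pos,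
      Finset.sum_mul]
    apply Finset.sum_congr rfl
    intro k _
    ring

lemma log_det_eq {A : Matrix (Fin q) (Fin q) ℝ} (hA : A.PosDef) :
    Real.log A.det = ∑ i, Real.log (hA.isHermitian.eigenvalues i) := by
  have h : A.det = ∏ i, hA.isHermitian.eigenvalues i := by
    simpa using hA.isHermitian.det_eq_prod_eigenvalues
  rw [h, Real.log_prod]
  exact fun i _ => (hA.eigenvalues_pos i).ne'

lemma uniform_quad_lb (S : ℕ → Matrix (Fin q) (Fin q) ℝ) (hSpd : ∀ n, (S n).PosDef)
    (Sigo : Matrix (Fin q) (Fin q) ℝ) (hSigo : Sigo.PosDef)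
    (hSconv : Tendsto S atTop (nhds Sigo)) :
    ∃ m : ℝ, 0 < m ∧ ∀ n, ∀ x : Fin q → ℝ, m * (x ⬝ᵥ x) ≤ x ⬝ᵥ (S n *ᵥ x) := by
  obtain ⟨m0, hm0, hq0⟩ := quad_lb hSigo
  have hdxx : ∀ x : Fin q → ℝ, 0 ≤ x ⬝ᵥ x :=
    fun x => Finset.sum_nonneg fun i _ => mul_self_nonneg _
  set ε : ℝ := m0 / (2 * (q + 1)) with hε
  have hεpos : 0 < ε := by positivity
  have hentry : ∀ i j, Tendsto (fun n => S n i j) atTop (nhds (Sigo i j)) := by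
    intro i j
    exact (((continuous_apply j).comp (continuous_apply i)).tendsto Sigo).comp hSconv
  have hev : ∀ᶠ n in atTop, ∀ i j, |S n i j - Sigo i j| ≤ ε := by
    rw [eventually_all]
    intro i
    rw [eventually_all]
    intro j
    have := (hentry i j).eventually (Metric.closedBall_mem_nhds (Sigo i j) hεpos)
    simpa [Real.dist_eq, Metric.mem_closedBall] using this
  obtain ⟨N, hN⟩ := eventually_atTop.mp hev
  -- for n ≥ N the bound m0/2 works
  have hlarge : ∀ n, N ≤ n → ∀ x : Fin q → ℝ, (m0/2) * (x ⬝ᵥ x) ≤ x ⬝ᵥ (S n *ᵥ x) := by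
    intro n hn x
    have hEbound : |x ⬝ᵥ ((S n - Sigo) *ᵥ x)| ≤ (m0/2) * (x ⬝ᵥ x) := by
      have h1 : |x ⬝ᵥ ((S n - Sigo) *ᵥ x)| ≤ ∑ i, ∑ j, |x i| * ε * |x j| := by
        calc |x ⬝ᵥ ((S n - Sigo) *ᵥ x)| = |∑ i, ∑ j, x i * ((S n - Sigo) i j * x j)| := by
              simp [dotProduct, Matrix.mulVec, Finset.mul_sum]
        _ ≤ ∑ i, |∑ j, x i * ((S n - Sigo) i j * x j)| := Finset.abs_sum_le_sum_abs _ _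
        _ ≤ ∑ i, ∑ j, |x i * ((S n - Sigo) i j * x j)| :=
              Finset.sum_le_sum fun i _ => Finset.abs_sum_le_sum_abs _ _
        _ ≤ ∑ i, ∑ j, |x i| * ε * |x j| := by
              refine Finset.sum_le_sum fun i _ => Finset.sum_le_sum fun j _ => ?_
              rw [abs_mul, abs_mul]
              have hij : |(S n - Sigo) i j| ≤ ε := by
                simpa [Matrix.sub_apply] using hN n hn i j
              calc |x i| * (|(S n - Sigo) i j| * |x j|)
                  ≤ |x i| * (ε * |x j|) := by
                    apply mul_le_mul_of_nonneg_left _ (abs_nonneg _)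
                    exact mul_le_mul_of_nonneg_right hij (abs_nonneg _)
                _ = |x i| * ε * |x j| := by ring
      have h2 : ∑ i, ∑ j, |x i| * ε * |x j| = ε * (∑ i, |x i|)^2 := by
        rw [sq, Finset.sum_mul_sum]
        rw [Finset.mul_sum]
        apply Finset.sum_congr rfl; intro i _
        rw [Finset.mul_sum]
        apply Finset.sum_congr rfl; intro j _
        ring
      have h3 : (∑ i, |x i|)^2 ≤ q * (x ⬝ᵥ x) := by
        have := sq_sum_le_card_mul_sum_sq (s := (Finset.univ : Finset (Fin q)))
          (f := fun i => |x i|)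
        simpa [dotProduct, sq_abs, sq] using this
      have h4 : ε * (q : ℝ) ≤ m0 / 2 := by
        have hq1 : (0:ℝ) < (q:ℝ) + 1 := by positivity
        have he : ε * ((q:ℝ) + 1) = m0 / 2 := by
          rw [hε]; field_simp
        nlinarith [hεpos.le]
      calc |x ⬝ᵥ ((S n - Sigo) *ᵥ x)| ≤ ε * (∑ i, |x i|)^2 := h1.trans (le_of_eq h2)
        _ ≤ ε * ((q : ℝ) * (x ⬝ᵥ x)) := mul_le_mul_of_nonneg_left h3 hεpos.le
        _ = (ε * (q : ℝ)) * (x ⬝ᵥ x) := by ring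
        _ ≤ (m0/2) * (x ⬝ᵥ x) := mul_le_mul_of_nonneg_right h4 (hdxx x)
    have := hq0 x
    have h5 : x ⬝ᵥ (S n *ᵥ x) = x ⬝ᵥ (Sigo *ᵥ x) + x ⬝ᵥ ((S n - Sigo) *ᵥ x) := by
      simp [sub_mulVec, dotProduct_sub]
    have := abs_le.mp hEbound
    linarith [this.1, this.2, hq0 x]
  -- combine with finitely many small n
  have hsmall : ∀ n, ∃ m, 0 < m ∧ ∀ x : Fin q → ℝ, m * (x ⬝ᵥ x) ≤ x ⬝ᵥ (S n *ᵥ x) :=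
    fun n => (quad_lb (hSpd n)).imp fun m hm => ⟨hm.1, hm.2⟩
  choose g hg1 hg2 using hsmall
  set F : Finset ℝ := insert (m0/2) ((Finset.range N).image g) with hF
  have hFne : F.Nonempty := ⟨m0/2, Finset.mem_insert_self _ _⟩
  refine ⟨F.min' hFne, ?_, ?_⟩
  · rcases Finset.mem_insert.mp (F.min'_mem hFne) with h | h
    · rw [h]; positivity
    · obtain ⟨n, _, hgn⟩ := Finset.mem_image.mp h
      rw [← hgn]; exact hg1 n
  · intro n x
    rcases lt_or_ge n N with hn | hn
    · have hle : F.min' hFne ≤ g n :=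
        Finset.min'_le _ _ (Finset.mem_insert_of_mem (Finset.mem_image_of_mem g
          (Finset.mem_range.mpr hn)))
      exact le_trans (mul_le_mul_of_nonneg_right hle (hdxx x)) (hg2 n x)
    · have hle : F.min' hFne ≤ m0/2 := Finset.min'_le _ _ (Finset.mem_insert_self _ _)
      exact le_trans (mul_le_mul_of_nonneg_right hle (hdxx x)) (hlarge n hn x)

end Helpers

/-- uniform eigenvalue bounds for the penalized estimators.  If
`S_n → Σ_o` (all positive definite) and `Σ̂_{n,η}` uniquely minimizes
`L(Σ; S_n, η)`, then there are `0 < c ≤ C < ∞` such that every eigenvalue of every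
`Σ̂_{n,η}` (for all `n` and all `η ≥ 0`) lies in `[c, C]`. -/
theorem stmt_16 (q : ℕ) (π : (Fin q → ℝ) → ℝ)
    (hπconv : ConvexOn ℝ Set.univ π)
    (hπperm : ∀ (σ : Equiv.Perm (Fin q)) (y : Fin q → ℝ), π (y ∘ σ) = π y)
    (Pen : Matrix (Fin q) (Fin q) ℝ → ℝ)
    (hPennn : ∀ A : Matrix (Fin q) (Fin q) ℝ, A.PosDef → 0 ≤ Pen A)
    (hPen : ∀ (A : Matrix (Fin q) (Fin q) ℝ) (hA : A.PosDef),
      Pen A = π fun i => Real.log (eigsDesc A hA.isHermitian i))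
    (Sigstar : Matrix (Fin q) (Fin q) ℝ) (hSigstar : Sigstar.PosDef)
    (hSigstar0 : Pen Sigstar = 0)
    (S : ℕ → Matrix (Fin q) (Fin q) ℝ) (hSpd : ∀ n, (S n).PosDef)
    (Sigo : Matrix (Fin q) (Fin q) ℝ) (hSigo : Sigo.PosDef)
    (hSconv : Filter.Tendsto S Filter.atTop (nhds Sigo))
    (Sighat : ℕ → ℝ → Matrix (Fin q) (Fin q) ℝ)
    (hSighat : ∀ n (η : ℝ), 0 ≤ η → (Sighat n η).PosDef ∧
      ∀ A : Matrix (Fin q) (Fin q) ℝ, A.PosDef →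
        (((Sighat n η)⁻¹ * S n).trace + Real.log (Sighat n η).det +
            η * Pen (Sighat n η) ≤
          (A⁻¹ * S n).trace + Real.log A.det + η * Pen A) ∧
        ((A⁻¹ * S n).trace + Real.log A.det + η * Pen A =
          ((Sighat n η)⁻¹ * S n).trace + Real.log (Sighat n η).det +
            η * Pen (Sighat n η) → A = Sighat n η)) :
    ∃ c C : ℝ, 0 < c ∧ c ≤ C ∧
      ∀ n (η : ℝ), 0 ≤ η → ∀ (h : (Sighat n η).IsHermitian) (i : Fin q),
        h.eigenvalues i ∈ Set.Icc c C := by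
  obtain ⟨m, hm, hmS⟩ := uniform_quad_lb S hSpd Sigo hSigo hSconv
  have htr : Tendsto (fun n => (Sigstar⁻¹ * S n).trace) atTop
      (nhds ((Sigstar⁻¹ * Sigo).trace)) := by
    have hrw : ∀ (M : Matrix (Fin q) (Fin q) ℝ),
        (Sigstar⁻¹ * M).trace = ∑ i, ∑ j, Sigstar⁻¹ i j * M j i := by
      intro M; simp [Matrix.trace, Matrix.diag, Matrix.mul_apply]
    simp only [hrw]
    apply tendsto_finset_sum; intro i _
    apply tendsto_finset_sum; intro j _
    have h1 : Tendsto (fun n => S n j) atTop (nhds (Sigo j)) :=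
      (((continuous_apply j).tendsto Sigo)).comp hSconv
    have h2 : Tendsto (fun n => S n j i) atTop (nhds (Sigo j i)) :=
      (((continuous_apply i).tendsto (Sigo j))).comp h1
    exact tendsto_const_nhds.mul h2
  obtain ⟨B0, hB0⟩ := exists_forall_le_of_tendsto htr
  set B : ℝ := B0 + Real.log Sigstar.det with hB
  set K : ℝ := B - ((q - 1 : ℕ) : ℝ) * (1 + Real.log m) with hK
  obtain ⟨c, hc, hcC, hbound⟩ := scalar_bound (m := m) (K := K) hm
  refine ⟨c, Real.exp K, hc, hcC, ?_⟩
  intro n η hη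
  obtain ⟨hpd, hmin⟩ := hSighat n η hη
  have hper := (hmin Sigstar hSigstar).1
  have μpos : ∀ i, 0 < hpd.isHermitian.eigenvalues i := fun i => hpd.eigenvalues_pos i
  obtain ⟨w, hw1, htrace⟩ := trace_inv_mul (Sighat n η) (S n) hpd
  have hdlog := log_det_eq hpd
  set f : Fin q → ℝ := fun i =>
    m * (hpd.isHermitian.eigenvalues i)⁻¹ + Real.log (hpd.isHermitian.eigenvalues i) with hf
  have hsum : ∑ i, f i ≤ B := by
    have e1 : ∑ i, m * (hpd.isHermitian.eigenvalues i)⁻¹ ≤ ((Sighat n η)⁻¹ * S n).trace := by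
      rw [htrace]
      apply Finset.sum_le_sum; intro i _
      have hwS : m ≤ w i ⬝ᵥ (S n *ᵥ w i) := by
        have := hmS n (w i); rwa [hw1 i, mul_one] at this
      calc m * (hpd.isHermitian.eigenvalues i)⁻¹
          = (hpd.isHermitian.eigenvalues i)⁻¹ * m := mul_comm _ _
        _ ≤ (hpd.isHermitian.eigenvalues i)⁻¹ * (w i ⬝ᵥ (S n *ᵥ w i)) :=
            mul_le_mul_of_nonneg_left hwS (inv_pos.mpr (μpos i)).le
    have e2 : 0 ≤ η * Pen (Sighat n η) := mul_nonneg hη (hPennn _ hpd)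
    have e3 : (Sigstar⁻¹ * S n).trace + Real.log Sigstar.det + η * Pen Sigstar ≤ B := by
      rw [hSigstar0, mul_zero, add_zero, hB]
      exact add_le_add_left (hB0 n) _
    have e4 : ∑ i, f i = (∑ i, m * (hpd.isHermitian.eigenvalues i)⁻¹) +
        ∑ i, Real.log (hpd.isHermitian.eigenvalues i) := by
      rw [hf, Finset.sum_add_distrib]
    rw [e4, ← hdlog]
    linarith
  have hterm : ∀ j, 1 + Real.log m ≤ f j := by
    intro j
    have hpos : 0 < m * (hpd.isHermitian.eigenvalues j)⁻¹ :=
      mul_pos hm (inv_pos.mpr (μpos j))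
    have h := Real.log_le_sub_one_of_pos hpos
    rw [Real.log_mul hm.ne' (inv_ne_zero (μpos j).ne'), Real.log_inv] at h
    rw [hf]
    simp only
    linarith
  intro h i
  have hKi : f i ≤ K := by
    have hsplit : f i + ∑ j ∈ Finset.univ.erase i, f j = ∑ j, f j :=
      Finset.add_sum_erase _ f (Finset.mem_univ i)
    have hcard : (Finset.univ.erase i).card = q - 1 := by
      rw [Finset.card_erase_of_mem (Finset.mem_univ i), Finset.card_univ, Fintype.card_fin]
    have hrest : ((q - 1 : ℕ) : ℝ) * (1 + Real.log m) ≤ ∑ j ∈ Finset.univ.erase i, f j := by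
      have := Finset.card_nsmul_le_sum (Finset.univ.erase i) f (1 + Real.log m)
        (fun j _ => hterm j)
      rwa [hcard, nsmul_eq_mul] at this
    rw [hK]
    linarith
  have hμ := hbound _ (μpos i) hKi
  have heig : h.eigenvalues i = hpd.isHermitian.eigenvalues i := rfl
  rw [Set.mem_Icc, heig]
  exact hμ
end

section
/- Let q ≥ 2, let d₁ > d₂ > ⋯ > d_q > 0, and let a₁ > a₂ > ⋯ > a_q be real numbers with Σ_{j=1}^q a_j = 0. For η ≥ 0 let λ̂(η) denote the unique minimizer over {λ ∈ ℝ^q : λ₁ ≥ ⋯ ≥ λ_q > 0} of ℒ(λ; d, η) = Σ_{j=1}^q ( d_j/λ_j + (1 + η·a_j)·log λ_j ). Set D_k = Σ_{j=1}^k d_j, A_k = Σ_{j=1}^k a_j, d̄ = D_q/q, and η_k = (q·D_k/D_q − k)/A_k for k = 1, …, q−1 (note A_k > 0 for these k). Then λ̂(η) is the constant vector (d̄, …, d̄) if and only if η ≥ max{η_k : k = 1, …, q−1}; equivalently, the last knot η(𝒢₁) := inf{η ≥ 0 : λ̂(η) is constant} equals max{η_k : k = 1, …, q−1}. -/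
lemma abel_identity (g x : ℕ → ℝ) : ∀ n : ℕ,
    ∑ j ∈ Finset.range (n+1), g j * x j =
      (∑ j ∈ Finset.range (n+1), g j) * x n +
        ∑ k ∈ Finset.range n, (∑ j ∈ Finset.range (k+1), g j) * (x k - x (k+1)) := by
  intro n
  induction n with
  | zero => simp
  | succ n ih =>
    rw [Finset.sum_range_succ (fun j => g j * x j), ih, Finset.sum_range_succ
      (fun k => (∑ j ∈ Finset.range (k+1), g j) * (x k - x (k+1))),
      Finset.sum_range_succ g n, Finset.sum_range_succ g (n+1), Finset.sum_range_succ g n]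
    ring

lemma anti_of_strict (q : ℕ) (a : ℕ → ℝ) (ha : ∀ j, j + 1 < q → a (j + 1) < a j) :
    ∀ i j, i ≤ j → j < q → a j ≤ a i := by
  intro i j hij
  induction j, hij using Nat.le_induction with
  | base => intro _; exact le_rfl
  | succ n hn ih => intro h; exact le_trans (le_of_lt (ha n h)) (ih (by omega))

lemma strict_partial (q : ℕ) (a : ℕ → ℝ) (ha : ∀ j, j + 1 < q → a (j + 1) < a j)
    (k : ℕ) (hk1 : 1 ≤ k) (hkq : k < q) :
    (k : ℝ) * ∑ j ∈ Finset.range q, a j < q * ∑ j ∈ Finset.range k, a j := by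
  obtain ⟨m, rfl⟩ : ∃ m, k = m + 1 := ⟨k - 1, by omega⟩
  have hmono := anti_of_strict q a ha
  have hsplit : ∑ j ∈ Finset.range (m+1), a j + ∑ j ∈ Finset.Ico (m+1) q, a j
      = ∑ j ∈ Finset.range q, a j := Finset.sum_range_add_sum_Ico a (by omega)
  have h1 : (m+1 : ℝ) * a m ≤ ∑ j ∈ Finset.range (m+1), a j := by
    have := Finset.card_nsmul_le_sum (Finset.range (m+1)) a (a m)
      (fun j hj => hmono j m (by simpa using Nat.lt_succ_iff.mp (Finset.mem_range.mp hj)) (by omega))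
    simpa [nsmul_eq_mul] using this
  have h2 : ∑ j ∈ Finset.Ico (m+1) q, a j ≤ ((q:ℝ) - (m+1)) * a (m+1) := by
    have := Finset.sum_le_card_nsmul (Finset.Ico (m+1) q) a (a (m+1))
      (fun j hj => by
        have := Finset.mem_Ico.mp hj
        exact hmono (m+1) j this.1 this.2)
    have hc : ((Finset.Ico (m+1) q).card : ℝ) = (q:ℝ) - (m+1) := by
      rw [Nat.card_Ico]; push_cast [Nat.cast_sub (by omega : m+1 ≤ q)]; ring
    calc ∑ j ∈ Finset.Ico (m+1) q, a j ≤ ((Finset.Ico (m+1) q).card : ℝ) * a (m+1) := by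
          simpa [nsmul_eq_mul] using this
      _ = ((q:ℝ) - (m+1)) * a (m+1) := by rw [hc]
  have h3 : a (m+1) < a m := ha m hkq
  have hq1 : (1:ℝ) ≤ (q:ℝ) - ((m:ℝ)+1) := by
    have : (m:ℝ) + 2 ≤ q := by exact_mod_cast (by omega : m + 2 ≤ q)
    linarith
  have c1 : (0:ℝ) ≤ (q:ℝ) - ((m:ℝ)+1) := by linarith
  have e1 := mul_le_mul_of_nonneg_left h1 c1
  have e2 := mul_le_mul_of_nonneg_left h2 (show (0:ℝ) ≤ (m:ℝ)+1 by positivity)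
  have e3 : 0 < ((m:ℝ)+1) * ((((q:ℝ)-((m:ℝ)+1))) * (a m - a (m+1))) :=
    mul_pos (by positivity) (mul_pos (lt_of_lt_of_le zero_lt_one hq1) (sub_pos.mpr h3))
  push_cast
  nlinarith [e1, e2, e3, hsplit]

set_option maxHeartbeats 1000000 in
/-- the last knot of the elasso path.  With `d₁ > ⋯ > d_q > 0`
(0-indexed: `d 0 > ⋯ > d (q−1)`), strictly decreasing weights `a` summing to zero,
`λ̂(η)` the unique minimizer of `ℒ(λ; d, η) = ∑_j (d_j/λ_j + (1 + η a_j) log λ_j)`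
over `λ₁ ≥ ⋯ ≥ λ_q > 0`, `D_k, A_k` the partial sums, `d̄ = D_q/q`, and
`η_k = (q D_k/D_q − k)/A_k` (`1 ≤ k ≤ q−1`): the `A_k` are positive, `λ̂(η)` is the
constant vector `(d̄, …, d̄)` iff `η ≥ max_k η_k`, and
`inf{η ≥ 0 : λ̂(η) constant} = max_k η_k`. -/
theorem stmt_18 (q : ℕ) (hq : 2 ≤ q) (d a : ℕ → ℝ)
    (hd : ∀ j, j + 1 < q → d (j + 1) < d j) (hdpos : ∀ j, j < q → 0 < d j)
    (ha : ∀ j, j + 1 < q → a (j + 1) < a j)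
    (hasum : ∑ j ∈ Finset.range q, a j = 0)
    (lamhat : ℝ → ℕ → ℝ)
    (hmin : ∀ η : ℝ, 0 ≤ η →
      ((∀ j, j + 1 < q → lamhat η (j + 1) ≤ lamhat η j) ∧
        (∀ j, j < q → 0 < lamhat η j)) ∧
      ∀ lam : ℕ → ℝ, (∀ j, j + 1 < q → lam (j + 1) ≤ lam j) →
        (∀ j, j < q → 0 < lam j) →
        ((∑ j ∈ Finset.range q,
            (d j / lamhat η j + (1 + η * a j) * Real.log (lamhat η j))) ≤
          ∑ j ∈ Finset.range q,
            (d j / lam j + (1 + η * a j) * Real.log (lam j))) ∧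
        ((∑ j ∈ Finset.range q,
            (d j / lam j + (1 + η * a j) * Real.log (lam j))) =
          (∑ j ∈ Finset.range q,
            (d j / lamhat η j + (1 + η * a j) * Real.log (lamhat η j))) →
          ∀ j, j < q → lam j = lamhat η j))
    (D A : ℕ → ℝ)
    (hD : ∀ k, D k = ∑ j ∈ Finset.range k, d j)
    (hA : ∀ k, A k = ∑ j ∈ Finset.range k, a j)
    (dbar : ℝ) (hdbar : dbar = D q / q)
    (ηk : ℕ → ℝ)
    (hηk : ∀ k, 1 ≤ k → k ≤ q - 1 → ηk k = (q * D k / D q - k) / A k)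
    (ηmax : ℝ)
    (hηmax : ηmax = Finset.sup' (Finset.Icc 1 (q - 1))
      (Finset.nonempty_Icc.mpr (by omega)) ηk) :
    (∀ k, 1 ≤ k → k ≤ q - 1 → 0 < A k) ∧
    (∀ η : ℝ, 0 ≤ η → ((∀ j, j < q → lamhat η j = dbar) ↔ ηmax ≤ η)) ∧
    sInf {η : ℝ | 0 ≤ η ∧ ∀ i, i < q → ∀ j, j < q → lamhat η i = lamhat η j}
      = ηmax := by
  have hq0 : 0 < q := by omega
  have hq0' : (0:ℝ) < q := by exact_mod_cast hq0
  have hDq : 0 < D q := by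
    rw [hD]
    exact Finset.sum_pos (fun j hj => hdpos j (Finset.mem_range.mp hj))
      ⟨0, Finset.mem_range.mpr hq0⟩
  have hdbarpos : 0 < dbar := hdbar ▸ div_pos hDq hq0'
  have hApos : ∀ k, 1 ≤ k → k ≤ q - 1 → 0 < A k := by
    intro k h1 h2
    have h := strict_partial q a ha k h1 (by omega)
    rw [hasum, mul_zero, ← hA] at h
    nlinarith [h, hq0']
  have hDk : ∀ k, 1 ≤ k → k ≤ q - 1 → (k:ℝ) * D q < q * D k := by
    intro k h1 h2
    rw [hD, hD]
    exact strict_partial q d hd k h1 (by omega)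
  have hηkpos : ∀ k, 1 ≤ k → k ≤ q - 1 → 0 < ηk k := by
    intro k h1 h2
    rw [hηk k h1 h2]
    apply div_pos _ (hApos k h1 h2)
    rw [sub_pos, lt_div_iff₀ hDq]
    linarith [hDk k h1 h2]
  have hDqdbar : D q / dbar = q := by
    rw [hdbar]; field_simp
  have hcsum : ∀ (η : ℝ) (m : ℕ), ∑ j ∈ Finset.range m, (1 + η * a j)
      = (m:ℝ) + η * A m := by
    intro η m
    rw [Finset.sum_add_distrib, Finset.sum_const, Finset.card_range, ← Finset.mul_sum, ← hA,
      nsmul_eq_mul, mul_one]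
  have hconstsum : ∀ (η c : ℝ), 0 < c →
      ∑ j ∈ Finset.range q, (d j / c + (1 + η * a j) * Real.log c)
        = D q / c + (q:ℝ) * Real.log c := by
    intro η c _
    rw [Finset.sum_add_distrib, ← Finset.sum_div, ← hD, ← Finset.sum_mul, hcsum, hA, hasum,
      mul_zero, add_zero]
  have hGsum : ∀ (η : ℝ) (m : ℕ),
      ∑ j ∈ Finset.range m, ((1 + η * a j) - d j / dbar)
        = (m:ℝ) + η * A m - D m / dbar := by
    intro η m
    rw [Finset.sum_sub_distrib, hcsum, ← Finset.sum_div, ← hD]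
  -- the key convexity bound: for η ≥ ηmax the constant vector minimizes
  have lower : ∀ η : ℝ, 0 ≤ η → ηmax ≤ η → ∀ lam : ℕ → ℝ,
      (∀ j, j + 1 < q → lam (j + 1) ≤ lam j) → (∀ j, j < q → 0 < lam j) →
      (∑ j ∈ Finset.range q, (d j / dbar + (1 + η * a j) * Real.log dbar)) ≤
        ∑ j ∈ Finset.range q, (d j / lam j + (1 + η * a j) * Real.log (lam j)) := by
    intro η hη0 hηm lam hdec hpos
    set x : ℕ → ℝ := fun j => Real.log (lam j) - Real.log dbar with hx
    set g : ℕ → ℝ := fun j => (1 + η * a j) - d j / dbar with hg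
    have hterm : ∀ j ∈ Finset.range q,
        d j / dbar + (1 + η * a j) * Real.log dbar + g j * x j ≤
          d j / lam j + (1 + η * a j) * Real.log (lam j) := by
      intro j hj
      have hjq := Finset.mem_range.mp hj
      have hlj := hpos j hjq
      have hexp : Real.exp (x j) = lam j / dbar := by
        simp only [hx]
        rw [Real.exp_sub, Real.exp_log hlj, Real.exp_log hdbarpos]
      have hlam : lam j = dbar * Real.exp (x j) := by
        rw [hexp]; field_simp
      have h1 : d j / lam j = d j / dbar * Real.exp (-(x j)) := by
        rw [hlam, div_mul_eq_div_div, Real.exp_neg, div_eq_mul_inv]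
      have h2 : Real.log (lam j) = Real.log dbar + x j := by simp [hx]
      have he : 1 - x j ≤ Real.exp (-(x j)) := by
        have := Real.add_one_le_exp (-(x j)); linarith
      have hdd : 0 ≤ d j / dbar := le_of_lt (div_pos (hdpos j hjq) hdbarpos)
      rw [h1, h2]
      simp only [hg]
      nlinarith [mul_le_mul_of_nonneg_left he hdd]
    have hsum := Finset.sum_le_sum hterm
    rw [Finset.sum_add_distrib] at hsum
    have hxs : 0 ≤ ∑ j ∈ Finset.range q, g j * x j := by
      have hGq : ∑ j ∈ Finset.range q, g j = 0 := by
        simp only [hg]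
        rw [hGsum, hA, hasum, mul_zero, add_zero, hDqdbar]; ring
      have hGk : ∀ k, k < q - 1 → 0 ≤ ∑ j ∈ Finset.range (k+1), g j := by
        intro k hk
        have h1 : 1 ≤ k+1 := by omega
        have h2 : k+1 ≤ q-1 := by omega
        have hAp := hApos (k+1) h1 h2
        have hηle : ηk (k+1) ≤ η :=
          le_trans (hηmax ▸ Finset.le_sup' ηk (Finset.mem_Icc.mpr ⟨h1, h2⟩)) hηm
        rw [hηk (k+1) h1 h2] at hηle
        have hd1 := (div_le_iff₀ hAp).mp hηle
        simp only [hg]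
        rw [hGsum]
        have hdd : D (k+1) / dbar = (q:ℝ) * D (k+1) / D q := by
          rw [hdbar]; field_simp
        rw [hdd]
        push_cast at hd1 ⊢
        linarith
      obtain ⟨p, rfl⟩ : ∃ p, q = p + 1 := ⟨q-1, by omega⟩
      rw [abel_identity g x p, hGq, zero_mul, zero_add]
      apply Finset.sum_nonneg
      intro k hk
      have hkp := Finset.mem_range.mp hk
      apply mul_nonneg (hGk k (by omega))
      have := hdec k (by omega)
      have hlog := Real.log_le_log (hpos (k+1) (by omega)) this
      simp only [hx]
      linarith
    linarith
  -- the iff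
  have iff2 : ∀ η : ℝ, 0 ≤ η → ((∀ j, j < q → lamhat η j = dbar) ↔ ηmax ≤ η) := by
    intro η hη0
    constructor
    · intro hconst
      by_contra hlt
      push_neg at hlt
      rw [hηmax] at hlt
      obtain ⟨k, hkmem, hk⟩ := (Finset.lt_sup'_iff _).mp hlt
      obtain ⟨h1, h2⟩ := Finset.mem_Icc.mp hkmem
      have hkq : k < q := by omega
      set s : ℝ := (q:ℝ) * D k / D q with hs
      set r : ℝ := (k:ℝ) + η * A k with hr
      have hAp := hApos k h1 h2
      have hrs : r < s := by
        rw [hηk k h1 h2] at hk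
        have := (lt_div_iff₀ hAp).mp hk
        simp only [hr, hs]; linarith
      have hr1 : (1:ℝ) ≤ r := by
        have hk1 : (1:ℝ) ≤ (k:ℝ) := by exact_mod_cast h1
        have := mul_nonneg hη0 hAp.le
        simp only [hr]; linarith
      have hr0 : (0:ℝ) < r := lt_of_lt_of_le zero_lt_one hr1
      set t : ℝ := (s - r) / (2 * r) with ht
      clear_value t
      have ht0 : 0 < t := by rw [ht]; exact div_pos (by linarith) (by linarith)
      set lam : ℕ → ℝ := fun j => if j < k then dbar * Real.exp t else dbar with hlamdef
      have hexp1 : (1:ℝ) ≤ Real.exp t := Real.one_le_exp ht0.le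
      have hlamdec : ∀ j, j + 1 < q → lam (j+1) ≤ lam j := by
        intro j hj
        simp only [hlamdef]
        split_ifs with c1 c2 c2
        · exact le_rfl
        · omega
        · nlinarith [hdbarpos, hexp1]
        · exact le_rfl
      have hlampos : ∀ j, j < q → 0 < lam j := by
        intro j hj
        simp only [hlamdef]
        split_ifs
        · positivity
        · exact hdbarpos
      have hle := ((hmin η hη0).2 lam hlamdec hlampos).1
      have hLhat : ∑ j ∈ Finset.range q, (d j / lamhat η j + (1 + η * a j) * Real.log (lamhat η j))
          = ∑ j ∈ Finset.range q, (d j / dbar + (1 + η * a j) * Real.log dbar) :=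
        Finset.sum_congr rfl (fun j hj => by rw [hconst j (Finset.mem_range.mp hj)])
      have hsdbar : D k / dbar = s := by
        simp only [hs, hdbar]; field_simp
      have hdiff : ∑ j ∈ Finset.range q, (d j / lam j + (1 + η * a j) * Real.log (lam j))
          = ∑ j ∈ Finset.range q, (d j / dbar + (1 + η * a j) * Real.log dbar)
            + (s * (Real.exp (-t) - 1) + r * t) := by
        have hsplit1 := Finset.sum_range_add_sum_Ico
          (fun j => d j / lam j + (1 + η * a j) * Real.log (lam j)) hkq.le
        have hsplit2 := Finset.sum_range_add_sum_Ico
          (fun j => d j / dbar + (1 + η * a j) * Real.log dbar) hkq.le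
        rw [← hsplit1, ← hsplit2]
        have hIco : ∑ j ∈ Finset.Ico k q, (d j / lam j + (1 + η * a j) * Real.log (lam j))
            = ∑ j ∈ Finset.Ico k q, (d j / dbar + (1 + η * a j) * Real.log dbar) := by
          apply Finset.sum_congr rfl
          intro j hj
          have := (Finset.mem_Ico.mp hj).1
          simp only [hlamdef, if_neg (by omega : ¬ j < k)]
        have hHead : ∑ j ∈ Finset.range k, (d j / lam j + (1 + η * a j) * Real.log (lam j))
            = ∑ j ∈ Finset.range k, (d j / dbar + (1 + η * a j) * Real.log dbar)
              + (s * (Real.exp (-t) - 1) + r * t) := by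
          have heq : ∀ j ∈ Finset.range k,
              d j / lam j + (1 + η * a j) * Real.log (lam j)
                = (d j / dbar + (1 + η * a j) * Real.log dbar)
                  + (d j / dbar * (Real.exp (-t) - 1) + (1 + η * a j) * t) := by
            intro j hj
            have hjk := Finset.mem_range.mp hj
            simp only [hlamdef, if_pos hjk]
            rw [Real.log_mul hdbarpos.ne' (Real.exp_ne_zero t), Real.log_exp,
              div_mul_eq_div_div, Real.exp_neg, div_eq_mul_inv (d j / dbar)]
            ring
          rw [Finset.sum_congr rfl heq, Finset.sum_add_distrib]
          congr 1
          rw [Finset.sum_add_distrib, ← Finset.sum_mul, ← Finset.sum_div, ← hD, hsdbar,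
            ← Finset.sum_mul, hcsum, ← hr]
        rw [hHead, hIco]; ring
      have hneg : s * (Real.exp (-t) - 1) + r * t < 0 := by
        have hs0 : (0:ℝ) < s := lt_trans hr0 hrs
        have h1t : (0:ℝ) < 1 + t := by linarith
        have hinv : Real.exp (-t) ≤ (1 + t)⁻¹ := by
          rw [Real.exp_neg]
          exact inv_anti₀ h1t (by linarith [Real.add_one_le_exp t])
        have key : r * (1 + t) < s := by
          have : r * (1 + t) = r + (s - r) / 2 := by
            rw [ht]; field_simp
          rw [this]; linarith
        have heq : s * ((1 + t)⁻¹ - 1) + r * t = t * (r * (1 + t) - s) / (1 + t) := by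
          field_simp; ring
        have hlt2 : s * ((1 + t)⁻¹ - 1) + r * t < 0 := by
          rw [heq]
          apply div_neg_of_neg_of_pos _ h1t
          exact mul_neg_of_pos_of_neg ht0 (by linarith)
        nlinarith [mul_le_mul_of_nonneg_left (sub_le_sub_right hinv 1) hs0.le]
      rw [hLhat, hdiff] at hle
      have h0 := (le_add_iff_nonneg_right _).mp hle
      linarith
    · intro hle
      have h1 := (hmin η hη0).2 (fun _ => dbar) (fun _ _ => le_rfl) (fun _ _ => hdbarpos)
      have h2 := lower η hη0 hle (lamhat η) (hmin η hη0).1.1 (hmin η hη0).1.2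
      intro j hj
      exact (h1.2 (le_antisymm h2 h1.1) j hj).symm
  refine ⟨hApos, iff2, ?_⟩
  have hub : 0 < ηmax :=
    lt_of_lt_of_le (hηkpos 1 le_rfl (by omega))
      (hηmax ▸ Finset.le_sup' ηk (Finset.mem_Icc.mpr ⟨le_rfl, by omega⟩))
  have hset : {η : ℝ | 0 ≤ η ∧ ∀ i, i < q → ∀ j, j < q → lamhat η i = lamhat η j}
      = Set.Ici ηmax := by
    ext η
    simp only [Set.mem_setOf_eq, Set.mem_Ici]
    constructor
    · rintro ⟨hη0, hc⟩
      apply (iff2 η hη0).mp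
      set c := lamhat η 0 with hcdef
      have hcall : ∀ j, j < q → lamhat η j = c := fun j hj => hc j hj 0 (by omega)
      have hcpos : 0 < c := (hmin η hη0).1.2 0 (by omega)
      have hLhat : ∑ j ∈ Finset.range q, (d j / lamhat η j + (1 + η * a j) * Real.log (lamhat η j))
          = D q / c + (q:ℝ) * Real.log c := by
        rw [Finset.sum_congr rfl (fun j hj => by
          rw [hcall j (Finset.mem_range.mp hj)])]
        exact hconstsum η c hcpos
      have hfle : D q / dbar + (q:ℝ) * Real.log dbar ≤ D q / c + (q:ℝ) * Real.log c := by
        have hlog := Real.log_le_sub_one_of_pos (div_pos hdbarpos hcpos)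
        rw [Real.log_div hdbarpos.ne' hcpos.ne'] at hlog
        have hDqe : D q = (q:ℝ) * dbar := by rw [hdbar]; field_simp
        rw [hDqe, mul_div_assoc, mul_div_assoc, div_self hdbarpos.ne']
        have := mul_le_mul_of_nonneg_left hlog hq0'.le
        rw [mul_sub] at this
        have hdvc : (q:ℝ) * (dbar / c) = (q:ℝ) * (dbar / c) := rfl
        nlinarith [this]
      have h1 := (hmin η hη0).2 (fun _ => dbar) (fun _ _ => le_rfl) (fun _ _ => hdbarpos)
      have hLconst : ∑ j ∈ Finset.range q, (d j / dbar + (1 + η * a j) * Real.log dbar)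
          = D q / dbar + (q:ℝ) * Real.log dbar := hconstsum η dbar hdbarpos
      intro j hj
      have heq : ∑ j ∈ Finset.range q, (d j / dbar + (1 + η * a j) * Real.log dbar)
          = ∑ j ∈ Finset.range q, (d j / lamhat η j + (1 + η * a j) * Real.log (lamhat η j)) := by
        apply le_antisymm
        · rw [hLconst, hLhat]; exact hfle
        · exact h1.1
      exact (h1.2 heq j hj).symm
    · intro hge
      have hη0 : 0 ≤ η := le_trans hub.le hge
      refine ⟨hη0, ?_⟩
      have hcq := (iff2 η hη0).mpr hge
      intro i hi j hj
      rw [hcq i hi, hcq j hj]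
  rw [hset]
  exact csInf_Ici
end
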